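/- arXiv:2003.04392 — 12 statements merged into one kernel-verified Lean document; each statement's English description precedes it below -/
import Mathlib

section
/- Let k ≥ 1 and n = 2^k, and let c : Z_n → {black, white} be a good coloring, i.e., c(a) ≠ c(a + n/2) for all a in Z_n. For any integers a, b, consider the arithmetic progression a, a+b, ..., a+(n-1)b reduced modulo n. Then the number of terms colored black equals the number of terms colored white, unless n divides b, in which case all n terms have the same color; in either case the number of black terms minus the number of white terms is a multiple of n (in Z). -/
/-- For `n = 2^k` and a good coloring `c : ZMod n → Bool`
(black = `true`), along the progression `a, a+b, …, a+(n-1)b` (mod `n`):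
if `n ∣ b` all terms have the same color, otherwise the number of black terms
equals the number of white terms; in either case the difference is a multiple
of `n`. -/
theorem good_coloring_progression_balanced (k : ℕ) (hk : 1 ≤ k)
    (c : ZMod (2 ^ k) → Bool)
    (hc : ∀ a : ZMod (2 ^ k), c (a + ((2 ^ (k - 1) : ℕ) : ZMod (2 ^ k))) ≠ c a)
    (a b : ℤ) :
    ((2 ^ k : ℤ) ∣ b →
      ∀ i ∈ Finset.range (2 ^ k),
        c (((a + (i : ℤ) * b : ℤ) : ZMod (2 ^ k))) = c ((a : ZMod (2 ^ k)))) ∧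
    (¬ (2 ^ k : ℤ) ∣ b →
      ((Finset.range (2 ^ k)).filter
          (fun (i : ℕ) => c (((a + (i : ℤ) * b : ℤ) : ZMod (2 ^ k))) = true)).card =
      ((Finset.range (2 ^ k)).filter
          (fun (i : ℕ) => c (((a + (i : ℤ) * b : ℤ) : ZMod (2 ^ k))) = false)).card) ∧
    (2 ^ k : ℤ) ∣
      ((((Finset.range (2 ^ k)).filter
          (fun (i : ℕ) => c (((a + (i : ℤ) * b : ℤ) : ZMod (2 ^ k))) = true)).card : ℤ) -
       (((Finset.range (2 ^ k)).filter
          (fun (i : ℕ) => c (((a + (i : ℤ) * b : ℤ) : ZMod (2 ^ k))) = false)).card : ℤ)) := by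
  have hn0 : 0 < 2 ^ k := Nat.pow_pos (by norm_num)
  -- Part 1
  have part1 : (2 ^ k : ℤ) ∣ b →
      ∀ i ∈ Finset.range (2 ^ k),
        c (((a + (i : ℤ) * b : ℤ) : ZMod (2 ^ k))) = c ((a : ZMod (2 ^ k))) := by
    intro hb i _
    have hb0 : ((b : ℤ) : ZMod (2 ^ k)) = 0 := by
      rw [ZMod.intCast_zmod_eq_zero_iff_dvd]
      exact_mod_cast hb
    push_cast
    rw [hb0]
    ring_nf
  -- Part 2
  have part2 : ¬ (2 ^ k : ℤ) ∣ b →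
      ((Finset.range (2 ^ k)).filter
          (fun (i : ℕ) => c (((a + (i : ℤ) * b : ℤ) : ZMod (2 ^ k))) = true)).card =
      ((Finset.range (2 ^ k)).filter
          (fun (i : ℕ) => c (((a + (i : ℤ) * b : ℤ) : ZMod (2 ^ k))) = false)).card := by
    intro hb
    have hbne : b ≠ 0 := by rintro rfl; exact hb (dvd_zero _)
    obtain ⟨v, m, hm, hvm⟩ := Nat.exists_eq_pow_mul_and_not_dvd
      (Int.natAbs_ne_zero.mpr hbne) 2 (by norm_num)
    -- b = 2^v * m' with m' odd (in ℤ)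
    have hsign : b.sign = 1 ∨ b.sign = -1 := by
      rcases lt_trichotomy b 0 with h | h | h
      · right; exact Int.sign_eq_neg_one_of_neg h
      · exact absurd h hbne
      · left; exact Int.sign_eq_one_of_pos h
    set m' : ℤ := b.sign * (m : ℤ) with hm'def
    have hb_eq : b = 2 ^ v * m' := by
      have h1 : b = b.sign * (b.natAbs : ℤ) := (Int.sign_mul_natAbs b).symm
      rw [h1, hvm]
      push_cast
      ring
    have hmodd : ∃ j : ℤ, m' - 1 = 2 * j := by
      have hm1 : ¬ (∃ q, m = 2 * q) := by
        rintro ⟨q, rfl⟩; exact hm ⟨q, rfl⟩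
      obtain ⟨q, hq⟩ : ∃ q, m = 2 * q + 1 := by
        rcases Nat.even_or_odd m with h | h
        · exact absurd (by rcases h with ⟨q, hq⟩; exact ⟨q, by omega⟩) hm1
        · rcases h with ⟨q, hq⟩; exact ⟨q, by omega⟩
      rcases hsign with h | h
      · exact ⟨q, by rw [hm'def, h, hq]; push_cast; ring⟩
      · exact ⟨-q - 1, by rw [hm'def, h, hq]; push_cast; ring⟩
    have hv : v < k := by
      by_contra h
      push_neg at h
      apply hb
      rw [hb_eq]
      exact Dvd.dvd.mul_right (pow_dvd_pow 2 h) m'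
    set t : ℕ := 2 ^ (k - 1 - v) with htdef
    have ht_lt : t < 2 ^ k := Nat.pow_lt_pow_right (by norm_num) (by omega)
    have hkey : (2 ^ k : ℤ) ∣ (t : ℤ) * b - (2 ^ (k - 1) : ℕ) := by
      obtain ⟨j, hj⟩ := hmodd
      have hexp : (k - 1 - v) + v = k - 1 := by omega
      have hexp2 : (k - 1) + 1 = k := by omega
      refine ⟨j, ?_⟩
      have h1 : (t : ℤ) * b = 2 ^ (k - 1) * m' := by
        rw [hb_eq, htdef]
        push_cast
        rw [← mul_assoc, ← pow_add, hexp]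
      have h2 : ((2 ^ (k - 1) : ℕ) : ℤ) = 2 ^ (k - 1) := by push_cast; ring
      have h3 : (2:ℤ) ^ k = 2 ^ (k - 1) * 2 := by rw [← pow_succ, hexp2]
      rw [h1, h2, h3]
      linear_combination (2:ℤ) ^ (k - 1) * hj
    -- shifting the index by t flips the color
    have hshift : ((t : ℤ) * b : ZMod (2 ^ k)) = ((2 ^ (k - 1) : ℕ) : ZMod (2 ^ k)) := by
      have h0 : (((t : ℤ) * b - (2 ^ (k - 1) : ℕ) : ℤ) : ZMod (2 ^ k)) = 0 := by
        rw [ZMod.intCast_zmod_eq_zero_iff_dvd]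
        exact_mod_cast hkey
      push_cast at h0 ⊢
      linear_combination h0
    have flip : ∀ i : ℕ,
        c (((a + ((i + t : ℕ) : ℤ) * b : ℤ) : ZMod (2 ^ k))) =
        ! c (((a + (i : ℤ) * b : ℤ) : ZMod (2 ^ k))) := by
      intro i
      have hterm : (((a + ((i + t : ℕ) : ℤ) * b : ℤ) : ZMod (2 ^ k))) =
          (((a + (i : ℤ) * b : ℤ) : ZMod (2 ^ k))) + ((2 ^ (k - 1) : ℕ) : ZMod (2 ^ k)) := by
        push_cast at hshift ⊢
        linear_combination hshift
      rw [hterm]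
      have := hc (((a + (i : ℤ) * b : ℤ) : ZMod (2 ^ k)))
      revert this
      cases c ((((a + (i : ℤ) * b : ℤ) : ZMod (2 ^ k))) + ((2 ^ (k - 1) : ℕ) : ZMod (2 ^ k))) <;>
        cases c (((a + (i : ℤ) * b : ℤ) : ZMod (2 ^ k))) <;> simp
    have castlem : ∀ x y : ℕ, x % 2 ^ k = y % 2 ^ k →
        c (((a + (x : ℤ) * b : ℤ) : ZMod (2 ^ k))) =
        c (((a + (y : ℤ) * b : ℤ) : ZMod (2 ^ k))) := by
      intro x y hxy
      have : ((x : ℕ) : ZMod (2 ^ k)) = ((y : ℕ) : ZMod (2 ^ k)) :=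
        (ZMod.natCast_eq_natCast_iff' x y (2 ^ k)).mpr hxy
      have h2 : (((a + (x : ℤ) * b : ℤ) : ZMod (2 ^ k))) =
          (((a + (y : ℤ) * b : ℤ) : ZMod (2 ^ k))) := by
        push_cast
        rw [this]
      rw [h2]
    have flipmod : ∀ i : ℕ, i < 2 ^ k →
        c (((a + (((i + t) % 2 ^ k : ℕ) : ℤ) * b : ℤ) : ZMod (2 ^ k))) =
        ! c (((a + (i : ℤ) * b : ℤ) : ZMod (2 ^ k))) := by
      intro i _
      rw [castlem ((i + t) % 2 ^ k) (i + t) (Nat.mod_mod_of_dvd (i + t) dvd_rfl)]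
      exact flip i
    have ht_le : t ≤ 2 ^ k := ht_lt.le
    clear_value t
    have hinv : ∀ i : ℕ, i < 2 ^ k → ((i + t) % 2 ^ k + (2 ^ k - t)) % 2 ^ k = i := by
      intro i hi
      rcases Nat.lt_or_ge (i + t) (2 ^ k) with h | h
      · rw [Nat.mod_eq_of_lt h]
        have : i + t + (2 ^ k - t) = i + 2 ^ k := by omega
        rw [this, Nat.add_mod_right, Nat.mod_eq_of_lt hi]
      · have h1 : (i + t) % 2 ^ k = i + t - 2 ^ k := by
          rw [Nat.mod_eq_sub_mod h, Nat.mod_eq_of_lt (by omega)]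
        rw [h1]
        have : i + t - 2 ^ k + (2 ^ k - t) = i := by omega
        rw [this, Nat.mod_eq_of_lt hi]
    apply Finset.card_bij' (fun i _ => (i + t) % 2 ^ k)
      (fun i _ => (i + (2 ^ k - t)) % 2 ^ k)
    · intro i hi
      simp only [Finset.mem_filter, Finset.mem_range] at hi ⊢
      refine ⟨Nat.mod_lt _ hn0, ?_⟩
      rw [flipmod i hi.1, hi.2]
      rfl
    · intro j hj
      simp only [Finset.mem_filter, Finset.mem_range] at hj ⊢
      refine ⟨Nat.mod_lt _ hn0, ?_⟩
      have h1 := flipmod ((j + (2 ^ k - t)) % 2 ^ k) (Nat.mod_lt _ hn0)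
      have h2 : ((j + (2 ^ k - t)) % 2 ^ k + t) % 2 ^ k = j := by
        rcases Nat.lt_or_ge (j + (2 ^ k - t)) (2 ^ k) with h | h
        · rw [Nat.mod_eq_of_lt h]
          have : j + (2 ^ k - t) + t = j + 2 ^ k := by omega
          rw [this, Nat.add_mod_right, Nat.mod_eq_of_lt hj.1]
        · have h3 : (j + (2 ^ k - t)) % 2 ^ k = j + (2 ^ k - t) - 2 ^ k := by
            rw [Nat.mod_eq_sub_mod h, Nat.mod_eq_of_lt (by omega)]
          rw [h3]
          have : j + (2 ^ k - t) - 2 ^ k + t = j := by omega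
          rw [this, Nat.mod_eq_of_lt hj.1]
      have h6 := castlem (((j + (2 ^ k - t)) % 2 ^ k + t) % 2 ^ k) j (by rw [h2])
      rw [h6, hj.2] at h1
      cases hx : c (((a + (((j + (2 ^ k - t)) % 2 ^ k : ℕ) : ℤ) * b : ℤ) : ZMod (2 ^ k)))
      · rw [hx] at h1; simp at h1
      · rfl
    · intro i hi
      simp only [Finset.mem_filter, Finset.mem_range] at hi
      exact hinv i hi.1
    · intro j hj
      simp only [Finset.mem_filter, Finset.mem_range] at hj
      rcases Nat.lt_or_ge (j + (2 ^ k - t)) (2 ^ k) with h | h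
      · rw [Nat.mod_eq_of_lt h]
        have : j + (2 ^ k - t) + t = j + 2 ^ k := by omega
        rw [this, Nat.add_mod_right, Nat.mod_eq_of_lt hj.1]
      · have h3 : (j + (2 ^ k - t)) % 2 ^ k = j + (2 ^ k - t) - 2 ^ k := by
          rw [Nat.mod_eq_sub_mod h, Nat.mod_eq_of_lt (by omega)]
        rw [h3]
        have : j + (2 ^ k - t) - 2 ^ k + t = j := by omega
        rw [this, Nat.mod_eq_of_lt hj.1]
  refine ⟨part1, part2, ?_⟩
  by_cases hd : (2 ^ k : ℤ) ∣ b
  · have hall := part1 hd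
    rcases hca : c ((a : ZMod (2 ^ k))) with _ | _
    · have h1 : ((Finset.range (2 ^ k)).filter
          (fun (i : ℕ) => c (((a + (i : ℤ) * b : ℤ) : ZMod (2 ^ k))) = true)) = ∅ := by
        apply Finset.filter_false_of_mem
        intro i hi
        rw [hall i hi, hca]; simp
      have h2 : ((Finset.range (2 ^ k)).filter
          (fun (i : ℕ) => c (((a + (i : ℤ) * b : ℤ) : ZMod (2 ^ k))) = false)) =
          Finset.range (2 ^ k) := by
        apply Finset.filter_true_of_mem
        intro i hi
        rw [hall i hi, hca]
      rw [h1, h2]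
      simp
    · have h1 : ((Finset.range (2 ^ k)).filter
          (fun (i : ℕ) => c (((a + (i : ℤ) * b : ℤ) : ZMod (2 ^ k))) = true)) =
          Finset.range (2 ^ k) := by
        apply Finset.filter_true_of_mem
        intro i hi
        rw [hall i hi, hca]
      have h2 : ((Finset.range (2 ^ k)).filter
          (fun (i : ℕ) => c (((a + (i : ℤ) * b : ℤ) : ZMod (2 ^ k))) = false)) = ∅ := by
        apply Finset.filter_false_of_mem
        intro i hi
        rw [hall i hi, hca]; simp
      rw [h1, h2]
      simp
  · rw [part2 hd]
    simp
end

section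
/- Let k ≥ 1 and n = 2^k, and let c : Z_n → {black, white} be a good coloring. Let a, b be integers with b even, and consider the arithmetic progression a, a+b, ..., a+(n/2 - 1)b reduced modulo n. Then the number of black terms minus the number of white terms is a multiple of n/2; moreover it is congruent to n/2 modulo n if n divides b, and congruent to 0 modulo n otherwise. -/
lemma sum_antiperiodic_eq_zero (ε : ℕ → ℤ) (t w : ℕ) (h : ∀ i, ε (i + t) = - ε i) :
    ∑ i ∈ Finset.range (2 * t * w), ε i = 0 := by
  induction w with
  | zero => simp
  | succ w ih =>
    have e : 2 * t * (w + 1) = 2 * t * w + (t + t) := by ring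
    rw [e, Finset.sum_range_add, ih, Finset.sum_range_add, zero_add]
    have : ∑ i ∈ Finset.range t, ε (2 * t * w + (t + i)) =
        ∑ i ∈ Finset.range t, - ε (2 * t * w + i) := by
      refine Finset.sum_congr rfl fun i _ => ?_
      rw [show 2 * t * w + (t + i) = (2 * t * w + i) + t by ring, h]
    rw [this, ← Finset.sum_add_distrib]
    simp

/-- For `n = 2^k`, a good coloring `c : ZMod n → Bool` and `b` even,
along the progression `a, a+b, …, a+(n/2-1)b` (mod `n`), the number of black
terms minus the number of white terms is a multiple of `n/2`; it is `≡ n/2 mod n`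
if `n ∣ b` and `≡ 0 mod n` otherwise. -/
theorem good_coloring_half_progression (k : ℕ) (hk : 1 ≤ k)
    (c : ZMod (2 ^ k) → Bool)
    (hc : ∀ a : ZMod (2 ^ k), c (a + ((2 ^ (k - 1) : ℕ) : ZMod (2 ^ k))) ≠ c a)
    (a b : ℤ) (hb : 2 ∣ b) :
    (2 ^ (k - 1) : ℤ) ∣
      ((((Finset.range (2 ^ (k - 1))).filter
          (fun (i : ℕ) => c (((a + (i : ℤ) * b : ℤ) : ZMod (2 ^ k))) = true)).card : ℤ) -
       (((Finset.range (2 ^ (k - 1))).filter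
          (fun (i : ℕ) => c (((a + (i : ℤ) * b : ℤ) : ZMod (2 ^ k))) = false)).card : ℤ)) ∧
    ((2 ^ k : ℤ) ∣ b →
      (2 ^ k : ℤ) ∣
        (((((Finset.range (2 ^ (k - 1))).filter
            (fun (i : ℕ) => c (((a + (i : ℤ) * b : ℤ) : ZMod (2 ^ k))) = true)).card : ℤ) -
         (((Finset.range (2 ^ (k - 1))).filter
            (fun (i : ℕ) => c (((a + (i : ℤ) * b : ℤ) : ZMod (2 ^ k))) = false)).card : ℤ)) -
          2 ^ (k - 1))) ∧
    (¬ (2 ^ k : ℤ) ∣ b →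
      (2 ^ k : ℤ) ∣
        ((((Finset.range (2 ^ (k - 1))).filter
            (fun (i : ℕ) => c (((a + (i : ℤ) * b : ℤ) : ZMod (2 ^ k))) = true)).card : ℤ) -
         (((Finset.range (2 ^ (k - 1))).filter
            (fun (i : ℕ) => c (((a + (i : ℤ) * b : ℤ) : ZMod (2 ^ k))) = false)).card : ℤ))) := by
  classical
  set m : ℕ := 2 ^ (k - 1) with hm
  set P : ℕ → Prop := fun i => c (((a + (i : ℤ) * b : ℤ) : ZMod (2 ^ k))) = true with hP
  set B := (Finset.range m).filter P with hB
  set W := (Finset.range m).filter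
      (fun (i : ℕ) => c (((a + (i : ℤ) * b : ℤ) : ZMod (2 ^ k))) = false) with hW
  have hmn : 2 ^ k = 2 * m := by
    rw [hm, ← pow_succ']; congr 1; omega
  have hmz' : ((m : ℕ) : ℤ) = 2 ^ (k - 1) := by rw [hm]; push_cast; ring
  have hnz' : (2 : ℤ) ^ k = 2 * 2 ^ (k - 1) := by
    rw [← pow_succ']; congr 1; omega
  -- cards add up
  have hcardBW : B.card + W.card = m := by
    have : W = (Finset.range m).filter (fun i => ¬ P i) := by
      apply Finset.filter_congr
      intro i _
      simp [hP, Bool.not_eq_true]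
    rw [hB, this, Finset.card_filter_add_card_filter_not, Finset.card_range]
  by_cases hdvd : (2 ^ k : ℤ) ∣ b
  · -- all terms are a
    have hconst : ∀ i : ℕ, ((a + (i : ℤ) * b : ℤ) : ZMod (2 ^ k)) = ((a : ℤ) : ZMod (2 ^ k)) := by
      intro i
      have h0 : (((i : ℤ) * b : ℤ) : ZMod (2 ^ k)) = 0 := by
        rw [ZMod.intCast_zmod_eq_zero_iff_dvd]
        exact Dvd.dvd.mul_left (by push_cast at hdvd ⊢; exact hdvd) _
      push_cast
      push_cast at h0
      rw [h0, add_zero]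
    by_cases hca : c ((a : ℤ) : ZMod (2 ^ k)) = true
    · have hBm : B = Finset.range m := by
        rw [hB]
        apply Finset.filter_true_of_mem
        intro i _
        simp only [hP]
        rw [hconst i]
        exact hca
      have hW0 : W = ∅ := by
        rw [hW]
        apply Finset.filter_false_of_mem
        intro i _
        rw [hconst i]
        simp [hca]
      rw [hBm, hW0, Finset.card_range, Finset.card_empty]
      exact ⟨⟨1, by push_cast [hmz']; ring⟩, fun _ => ⟨0, by push_cast [hmz']; ring⟩,
        fun h => absurd hdvd h⟩
    · have hW' : c ((a : ℤ) : ZMod (2 ^ k)) = false := by simp at hca; exact hca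
      have hBm : B = ∅ := by
        rw [hB]
        apply Finset.filter_false_of_mem
        intro i _
        simp only [hP]
        rw [hconst i]
        simp [hW']
      have hWm : W = Finset.range m := by
        rw [hW]
        apply Finset.filter_true_of_mem
        intro i _
        rw [hconst i]
        exact hW'
      rw [hBm, hWm, Finset.card_range, Finset.card_empty]
      exact ⟨⟨-1, by push_cast [hmz']; ring⟩, fun _ => ⟨-1, by push_cast [hmz', hnz']; ring⟩,
        fun h => absurd hdvd h⟩
  · -- nontrivial case: show B.card = W.card
    have hb0 : b ≠ 0 := by rintro rfl; exact hdvd (dvd_zero _)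
    set s : ℕ := b.natAbs.factorization 2 with hs
    have hna : b.natAbs ≠ 0 := Int.natAbs_ne_zero.2 hb0
    have hs1 : 1 ≤ s := by
      have h2 : ((2 ^ 1 : ℕ) : ℤ) ∣ b := by push_cast; exact hb
      exact (Nat.Prime.pow_dvd_iff_le_factorization Nat.prime_two hna).1 (Int.natCast_dvd.1 h2)
    have hs2 : s < k := by
      by_contra h
      push_neg at h
      have h1 : 2 ^ k ∣ b.natAbs :=
        (Nat.Prime.pow_dvd_iff_le_factorization Nat.prime_two hna).2 h
      have h2 : ((2 ^ k : ℕ) : ℤ) ∣ b := Int.natCast_dvd.2 h1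
      exact hdvd (by exact_mod_cast h2)
    obtain ⟨u, hu⟩ : (2 ^ s : ℤ) ∣ b := by
      have h2 : ((2 ^ s : ℕ) : ℤ) ∣ b := Int.natCast_dvd.2 (Nat.ordProj_dvd _ _)
      exact_mod_cast h2
    have hu_odd : ¬ (2 ∣ u) := by
      intro h2u
      have h3 : (2 : ℤ) ^ (s + 1) ∣ b := by
        obtain ⟨v, hv⟩ := h2u
        exact ⟨v, by rw [hu, hv]; ring⟩
      have h4 : ((2 ^ (s + 1) : ℕ) : ℤ) ∣ b := by exact_mod_cast h3
      have := (Nat.Prime.pow_dvd_iff_le_factorization Nat.prime_two hna).1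
        (Int.natCast_dvd.1 h4)
      omega
    obtain ⟨v, hv⟩ : ∃ v : ℤ, u = 2 * v + 1 := by
      rcases Int.even_or_odd u with h | h
      · exact absurd h.two_dvd hu_odd
      · obtain ⟨v, hv⟩ := h; exact ⟨v, hv⟩
    set t : ℕ := 2 ^ (k - 1 - s) with htdef
    have hmz : ((m : ℕ) : ℤ) = 2 ^ s * (t : ℤ) := by
      rw [hm, htdef]; push_cast
      rw [← pow_add]; congr 1; omega
    have h2z : ((2 ^ k : ℕ) : ℤ) = 2 * ((m : ℕ) : ℤ) := by
      rw [hmn]; push_cast; ring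
    -- the key antiperiodicity
    have hflip : ∀ x : ZMod (2 ^ k), c (x + ((m : ℕ) : ZMod (2 ^ k))) = ! c x := by
      intro x
      have := hc x
      cases hx : c x <;> cases hy : c (x + ((m : ℕ) : ZMod (2 ^ k))) <;>
        first | rfl | exact absurd (hy.trans hx.symm) this
    have hzero : (2 : ZMod (2 ^ k)) ^ k = 0 := by
      have := ZMod.natCast_self (2 ^ k)
      push_cast at this
      exact this
    have hkey : ∀ i : ℕ, c (((a + ((i + t : ℕ) : ℤ) * b : ℤ) : ZMod (2 ^ k))) =
        ! c (((a + (i : ℤ) * b : ℤ) : ZMod (2 ^ k))) := by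
      intro i
      have heq : (a + ((i + t : ℕ) : ℤ) * b : ℤ) =
          (a + (i : ℤ) * b) + ((m : ℕ) : ℤ) + ((2 ^ k : ℕ) : ℤ) * v := by
        rw [hu, hv, h2z, hmz]
        push_cast
        ring
      have hcast : (((a + ((i + t : ℕ) : ℤ) * b : ℤ)) : ZMod (2 ^ k)) =
          (((a + (i : ℤ) * b : ℤ)) : ZMod (2 ^ k)) + ((m : ℕ) : ZMod (2 ^ k)) := by
        rw [heq]
        push_cast [hzero]
        ring
      rw [hcast, hflip]
    -- convert counting to a sum
    set ε : ℕ → ℤ := fun i => if P i then 1 else -1 with hε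
    have hanti : ∀ i, ε (i + t) = - ε i := by
      intro i
      have h2 := hkey i
      simp only [hε, hP]
      rw [h2]
      cases c (((a + (i : ℤ) * b : ℤ) : ZMod (2 ^ k))) <;> simp
    have hsum0 : ∑ i ∈ Finset.range m, ε i = 0 := by
      have hm' : m = 2 * t * 2 ^ (s - 1) := by
        rw [hm, htdef, show 2 * 2 ^ (k-1-s) * 2 ^ (s-1) = 2 ^ (1 + (k-1-s) + (s-1)) by
          rw [pow_add, pow_add, pow_one]]
        congr 1; omega
      rw [hm']
      exact sum_antiperiodic_eq_zero ε t _ hanti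
    have hsum2 : ∑ i ∈ Finset.range m, ε i = 2 * (B.card : ℤ) - m := by
      have hεi : ∀ i, ε i = 2 * (if P i then (1:ℤ) else 0) - 1 := by
        intro i
        simp only [hε]
        split_ifs <;> norm_num
      rw [Finset.sum_congr rfl (fun i _ => hεi i), Finset.sum_sub_distrib,
        ← Finset.mul_sum, Finset.sum_boole, Finset.sum_const, Finset.card_range]
      rw [hB]
      simp only [hm, smul_eq_mul, mul_one]
      push_cast
      ring
    have hBW : (B.card : ℤ) = W.card := by
      have h5 : (B.card : ℤ) + W.card = m := by exact_mod_cast hcardBW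
      omega
    rw [hBW, sub_self]
    exact ⟨dvd_zero _, fun h => absurd h hdvd, fun _ => dvd_zero _⟩
end

section
/- Let p be a prime, k ≥ 1, n = p^k, and let c : Z_n → Z_n be a p-good coloring. For any integers a, b, the sum c(a) + c(a+b) + c(a+2b) + ... + c(a+(n-1)b) equals 0 in Z_n (where the arguments are reduced modulo n). -/
open Finset

private lemma sum_range_mul'' {M : Type*} [AddCommMonoid M] (f : ℕ → M) (a b : ℕ) :
    ∑ i ∈ Finset.range (a * b), f i
      = ∑ t ∈ Finset.range a, ∑ j ∈ Finset.range b, f (t * b + j) := by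
  induction a with
  | zero => simp
  | succ a ih =>
    rw [Nat.succ_mul, Finset.sum_range_add, ih, Finset.sum_range_succ]

private lemma sum_range_zmod {N : ℕ} [NeZero N] {M : Type*} [AddCommMonoid M]
    (f : ZMod N → M) : ∑ i ∈ Finset.range N, f (i : ZMod N) = ∑ x : ZMod N, f x := by
  refine Finset.sum_nbij' (i := fun i => (i : ZMod N)) (j := fun x => x.val) ?_ ?_ ?_ ?_ ?_
  · intro a _; exact Finset.mem_univ _
  · intro a _; exact Finset.mem_range.mpr (ZMod.val_lt a)
  · intro a ha; exact ZMod.val_cast_of_lt (Finset.mem_range.mp ha)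
  · intro a _; exact ZMod.natCast_rightInverse a
  · intro a _; rfl

private lemma cast_val_mul (p k m : ℕ) (hm : m + 1 ≤ k) [NeZero (p ^ (m+1))] (j : ℕ) :
    ((j * p ^ (k - (m+1)) : ℕ) : ZMod (p ^ k))
      = (((j : ZMod (p ^ (m+1))).val * p ^ (k - (m+1)) : ℕ) : ZMod (p ^ k)) := by
  rw [ZMod.val_natCast]
  have hNQ : (p ^ (m+1) * p ^ (k - (m+1)) : ℕ) = p ^ k := by
    rw [← pow_add]; congr 1; omega
  have h : j * p ^ (k - (m+1))
      = j % p ^ (m+1) * p ^ (k - (m+1)) + p ^ k * (j / p ^ (m+1)) := by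
    conv_lhs => rw [← Nat.mod_add_div j (p ^ (m+1))]
    rw [← hNQ]; ring
  have hz : ((p ^ k * (j / p ^ (m+1)) : ℕ) : ZMod (p ^ k)) = 0 := by
    rw [Nat.cast_mul, ZMod.natCast_self, zero_mul]
  rw [h, Nat.cast_add, hz, add_zero]

private lemma key_lemma (p : ℕ) (hp : p.Prime) (k : ℕ)
    (c : ZMod (p ^ k) → ZMod (p ^ k))
    (hc : ∀ a : ZMod (p ^ k),
      ∑ i ∈ Finset.range p, c (a + ((i * p ^ (k - 1) : ℕ) : ZMod (p ^ k))) = 0) :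
    ∀ m, m ≤ k → ∀ (b : ℕ) (A : ZMod (p ^ k)),
      (p ^ (k - m)) •
        (∑ i ∈ Finset.range (p ^ m), c (A + ((i * p ^ (k - m) * b : ℕ) : ZMod (p ^ k)))) = 0 := by
  intro m
  induction m with
  | zero =>
    intro _ b A
    simp only [Nat.sub_zero, pow_zero, Finset.range_one, Finset.sum_singleton, Nat.zero_mul,
      Nat.cast_zero, add_zero, zero_mul]
    rw [nsmul_eq_mul]
    simp [ZMod.natCast_self]
  | succ m ih =>
    intro hm b A
    haveI : NeZero (p ^ (m+1)) := NeZero.of_pos (pow_pos hp.pos _)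
    have h1 : p ^ (k - (m+1)) * p = p ^ (k - m) := by rw [← pow_succ]; congr 1; omega
    have h3 : p ^ m * p ^ (k - m) = p ^ k := by rw [← pow_add]; congr 1; omega
    by_cases hpb : p ∣ b
    · obtain ⟨b₂, rfl⟩ := hpb
      have hsplit : ∑ i ∈ Finset.range (p ^ (m+1)),
            c (A + ((i * p ^ (k - (m+1)) * (p * b₂) : ℕ) : ZMod (p ^ k)))
          = p • ∑ i ∈ Finset.range (p ^ m),
              c (A + ((i * p ^ (k - m) * b₂ : ℕ) : ZMod (p ^ k))) := by
        have hpm : p ^ (m+1) = p * p ^ m := by rw [pow_succ]; ring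
        rw [hpm, sum_range_mul'' (fun i =>
          c (A + ((i * p ^ (k - (m+1)) * (p * b₂) : ℕ) : ZMod (p ^ k)))) p (p ^ m)]
        have hterm : ∀ t j : ℕ,
            c (A + (((t * p ^ m + j) * p ^ (k - (m+1)) * (p * b₂) : ℕ) : ZMod (p ^ k)))
              = c (A + ((j * p ^ (k - m) * b₂ : ℕ) : ZMod (p ^ k))) := by
          intro t j
          have hnat : (t * p ^ m + j) * p ^ (k - (m+1)) * (p * b₂)
              = p ^ k * (t * b₂) + j * p ^ (k - m) * b₂ := by
            rw [← h3, ← h1]; ring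
          rw [hnat, Nat.cast_add, Nat.cast_mul, ZMod.natCast_self, zero_mul, zero_add]
        calc ∑ t ∈ Finset.range p, ∑ j ∈ Finset.range (p ^ m),
              c (A + (((t * p ^ m + j) * p ^ (k - (m+1)) * (p * b₂) : ℕ) : ZMod (p ^ k)))
            = ∑ t ∈ Finset.range p, ∑ j ∈ Finset.range (p ^ m),
              c (A + ((j * p ^ (k - m) * b₂ : ℕ) : ZMod (p ^ k))) := by
              exact Finset.sum_congr rfl fun t _ => Finset.sum_congr rfl fun j _ => hterm t j
          _ = _ := by rw [Finset.sum_const, Finset.card_range]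
      rw [hsplit, smul_smul, h1]
      exact ih (by omega) b₂ A
    · have main : ∑ i ∈ Finset.range (p ^ (m+1)),
          c (A + ((i * p ^ (k - (m+1)) * b : ℕ) : ZMod (p ^ k))) = 0 := by
        have hb : IsUnit (b : ZMod (p ^ (m+1))) := by
          rw [ZMod.isUnit_iff_coprime]
          exact ((Nat.Prime.coprime_iff_not_dvd hp).mpr hpb).symm.pow_right _
        have h2 : p ^ m * p ^ (k - (m+1)) = p ^ (k - 1) := by rw [← pow_add]; congr 1; omega
        calc ∑ i ∈ Finset.range (p ^ (m+1)),
              c (A + ((i * p ^ (k - (m+1)) * b : ℕ) : ZMod (p ^ k)))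
            = ∑ i ∈ Finset.range (p ^ (m+1)),
              c (A + (((((i : ZMod (p ^ (m+1))) * (b : ZMod (p ^ (m+1)))).val
                  * p ^ (k - (m+1)) : ℕ)) : ZMod (p ^ k))) := by
              refine Finset.sum_congr rfl fun i _ => ?_
              have h : (i * p ^ (k - (m+1)) * b : ℕ) = (i * b) * p ^ (k - (m+1)) := by ring
              rw [h, cast_val_mul p k m hm (i * b)]
              norm_cast
          _ = ∑ x : ZMod (p ^ (m+1)),
              c (A + (((x * (b : ZMod (p ^ (m+1)))).val
                  * p ^ (k - (m+1)) : ℕ) : ZMod (p ^ k))) :=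
              sum_range_zmod (fun x : ZMod (p ^ (m+1)) =>
                c (A + (((x * (b : ZMod (p ^ (m+1)))).val
                  * p ^ (k - (m+1)) : ℕ) : ZMod (p ^ k))))
          _ = ∑ x : ZMod (p ^ (m+1)),
              c (A + ((x.val * p ^ (k - (m+1)) : ℕ) : ZMod (p ^ k))) :=
              Fintype.sum_bijective (· * (b : ZMod (p ^ (m+1))))
                (IsUnit.isUnit_iff_mulRight_bijective.mp hb) _ _ fun x => rfl
          _ = ∑ i ∈ Finset.range (p ^ (m+1)),
              c (A + ((i * p ^ (k - (m+1)) : ℕ) : ZMod (p ^ k))) := by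
              rw [← sum_range_zmod (fun x : ZMod (p ^ (m+1)) =>
                c (A + ((x.val * p ^ (k - (m+1)) : ℕ) : ZMod (p ^ k))))]
              exact Finset.sum_congr rfl fun i _ => by
                rw [← cast_val_mul p k m hm i]
          _ = 0 := by
              have hpm : p ^ (m+1) = p * p ^ m := by rw [pow_succ]; ring
              rw [hpm, sum_range_mul'']
              rw [Finset.sum_comm]
              refine Finset.sum_eq_zero fun j _ => ?_
              have hterm : ∀ t : ℕ,
                  c (A + (((t * p ^ m + j) * p ^ (k - (m+1)) : ℕ) : ZMod (p ^ k)))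
                    = c ((A + ((j * p ^ (k - (m+1)) : ℕ) : ZMod (p ^ k)))
                        + ((t * p ^ (k - 1) : ℕ) : ZMod (p ^ k))) := by
                intro t
                have hnat : (t * p ^ m + j) * p ^ (k - (m+1))
                    = j * p ^ (k - (m+1)) + t * p ^ (k - 1) := by rw [← h2]; ring
                rw [hnat]
                push_cast
                ring_nf
              rw [Finset.sum_congr rfl fun t _ => hterm t]
              exact hc _
      rw [main, smul_zero]

/-- For a prime `p`, `n = p^k` and a `p`-good coloring
`c : ZMod n → ZMod n`, the sum of `c` along any arithmetic progression
`a, a+b, …, a+(n-1)b` (mod `n`) is `0` in `ZMod n`. -/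
theorem p_good_coloring_full_progression (p : ℕ) (hp : p.Prime) (k : ℕ) (hk : 1 ≤ k)
    (c : ZMod (p ^ k) → ZMod (p ^ k))
    (hc : ∀ a : ZMod (p ^ k),
      ∑ i ∈ Finset.range p, c (a + ((i * p ^ (k - 1) : ℕ) : ZMod (p ^ k))) = 0)
    (a b : ℤ) :
    ∑ i ∈ Finset.range (p ^ k), c (((a + (i : ℤ) * b : ℤ) : ZMod (p ^ k))) = 0 := by
  set b₀ : ℕ := (b % (p ^ k : ℕ)).toNat with hb₀
  have hcast : ((b₀ : ℕ) : ZMod (p ^ k)) = ((b : ℤ) : ZMod (p ^ k)) := by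
    have h1 : ((b₀ : ℤ)) = b % (p ^ k : ℕ) :=
      Int.toNat_of_nonneg (Int.emod_nonneg b (by exact_mod_cast (pow_pos hp.pos k).ne'))
    calc ((b₀ : ℕ) : ZMod (p ^ k)) = ((b₀ : ℤ) : ZMod (p ^ k)) := by push_cast; ring
      _ = ((b % (p ^ k : ℕ) : ℤ) : ZMod (p ^ k)) := by rw [h1]
      _ = (b : ZMod (p ^ k)) := ZMod.intCast_mod b (p ^ k)
  have hkey := key_lemma p hp k c hc k le_rfl b₀ ((a : ℤ) : ZMod (p ^ k))
  rw [Nat.sub_self, pow_zero, one_smul] at hkey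
  refine Eq.trans (Finset.sum_congr rfl fun i _ => ?_) hkey
  congr 1
  push_cast
  rw [hcast]
  push_cast
  ring
end

section
/- For every integer k ≥ 2, the central binomial coefficient C(2^k, 2^(k-1)) is congruent to 6 modulo 8. In particular, C(2^k, 2^(k-1)) − 2 is not a multiple of 8. -/
lemma four_dvd_choose_pow (k i : ℕ) (hk : 2 ≤ k) (h0 : 0 < i) (h1 : i < 2^k)
    (h2 : i ≠ 2^(k-1)) : 4 ∣ Nat.choose (2^k) i := by
  set a := i.factorization 2 with ha
  have hi0 : i ≠ 0 := h0.ne'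
  have hsplit : 2^a * (i / 2^a) = i := Nat.ordProj_mul_ordCompl_eq_self i 2
  have hbodd : ¬ 2 ∣ (i / 2^a) := Nat.not_dvd_ordCompl Nat.prime_two hi0
  have h2k : 0 < 2^k := Nat.pow_pos (by norm_num)
  have hid : 2^k * Nat.choose (2^k - 1) (i - 1) = Nat.choose (2^k) i * i := by
    have h := Nat.add_one_mul_choose_eq (2^k - 1) (i - 1)
    have e1 : 2^k - 1 + 1 = 2^k := Nat.succ_pred_eq_of_pos h2k
    have e2 : i - 1 + 1 = i := Nat.succ_pred_eq_of_pos h0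
    rw [e1, e2] at h
    exact h
  have hdvd : 2^k ∣ Nat.choose (2^k) i * (2^a * (i / 2^a)) := by
    rw [hsplit]; exact ⟨_, hid.symm⟩
  have hcop : Nat.Coprime (2^k) (i / 2^a) :=
    Nat.Coprime.pow_left _ ((Nat.Prime.coprime_iff_not_dvd Nat.prime_two).mpr hbodd)
  have hdvd2 : 2^k ∣ Nat.choose (2^k) i * 2^a := by
    apply hcop.dvd_of_dvd_mul_right
    rw [mul_assoc]
    exact hdvd
  have hale : a + 2 ≤ k := by
    by_contra hcon
    have hk1a : k - 1 ≤ a := by omega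
    have hdvi : 2^(k-1) ∣ i := dvd_trans (pow_dvd_pow 2 hk1a) (Nat.ordProj_dvd i 2)
    obtain ⟨c, hc⟩ := hdvi
    have h2k1 : 2^k = 2^(k-1) * 2 := by
      rw [← pow_succ]; congr 1; omega
    have hp : 0 < 2^(k-1) := Nat.pow_pos (by norm_num)
    have : c < 2 := by
      by_contra hc2
      push_neg at hc2
      have := Nat.mul_le_mul_left (2^(k-1)) hc2
      omega
    interval_cases c
    · omega
    · omega
  have hfinal : 2^(k-a) ∣ Nat.choose (2^k) i := by
    have hdvd3 : 2^(k-a) * 2^a ∣ Nat.choose (2^k) i * 2^a := by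
      rw [← pow_add, Nat.sub_add_cancel (by omega : a ≤ k)]
      exact hdvd2
    exact (mul_dvd_mul_iff_right (Nat.pow_pos (n := a) (by norm_num : 0 < 2)).ne').mp hdvd3
  calc (4:ℕ) = 2^2 := by norm_num
    _ ∣ 2^(k-a) := pow_dvd_pow 2 (by omega)
    _ ∣ _ := hfinal

open Finset

lemma cast_zmod8_of_mod (n : ℕ) (h : n % 8 = 6) : (n : ZMod 8) = 6 := by
  have : ((n % 8 : ℕ) : ZMod 8) = ((6 : ℕ) : ZMod 8) := by rw [h]
  rwa [ZMod.natCast_mod] at this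
  
lemma mod_of_cast_zmod8 (n : ℕ) (h : (n : ZMod 8) = 6) : n % 8 = 6 := by
  have h2 : ((n % 8 : ℕ) : ZMod 8) = 6 := by rwa [ZMod.natCast_mod]
  have hlt : n % 8 < 8 := Nat.mod_lt _ (by norm_num)
  interval_cases h' : n % 8 <;> revert h2 <;> decide


lemma main_mod (k : ℕ) (hk : 2 ≤ k) : Nat.choose (2 ^ k) (2 ^ (k - 1)) % 8 = 6 := by
  induction k, hk using Nat.le_induction with
  | base => decide
  | succ k hk ih =>
    have hk1 : (k + 1) - 1 = k := by omega
    rw [hk1]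
    apply mod_of_cast_zmod8
    have hv : Nat.choose (2^(k+1)) (2^k)
        = ∑ i ∈ range (2^k + 1), Nat.choose (2^k) i * Nat.choose (2^k) (2^k - i) := by
      rw [show (2:ℕ)^(k+1) = 2^k + 2^k by ring, Nat.add_choose_eq]
      exact Finset.Nat.sum_antidiagonal_eq_sum_range_succ
        (fun i j => Nat.choose (2^k) i * Nat.choose (2^k) j) (2^k)
    have hsq : ∀ i ∈ range (2^k + 1),
        Nat.choose (2^k) i * Nat.choose (2^k) (2^k - i) = (Nat.choose (2^k) i)^2 := by
      intro i hi
      rw [mem_range] at hi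
      rw [Nat.choose_symm (by omega), sq]
    rw [hv, Finset.sum_congr rfl hsq]
    push_cast
    -- sum localizes to {0, 2^(k-1), 2^k}
    have hsubset : ({0, 2^(k-1), 2^k} : Finset ℕ) ⊆ range (2^k + 1) := by
      intro x hx
      simp only [mem_insert, mem_singleton] at hx
      have h1 : 2^(k-1) < 2^k := Nat.pow_lt_pow_right (by norm_num) (by omega)
      rcases hx with rfl | rfl | rfl <;> simp [mem_range] <;> omega
    rw [← Finset.sum_subset hsubset]
    · have hne1 : (0:ℕ) ≠ 2^(k-1) := by positivity
      have hne2 : (0:ℕ) ≠ 2^k := by positivity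
      have hne3 : (2:ℕ)^(k-1) ≠ 2^k := by
        have : 2^(k-1) < 2^k := Nat.pow_lt_pow_right (by norm_num) (by omega)
        omega
      rw [Finset.sum_insert (by simp [hne1, hne2]),
          Finset.sum_insert (by simp [hne3]), Finset.sum_singleton]
      have hih : ((Nat.choose (2^k) (2^(k-1)) : ℕ) : ZMod 8) = 6 :=
        cast_zmod8_of_mod _ ih
      rw [Nat.choose_zero_right, Nat.choose_self, hih]
      decide
    · intro i hi hni
      rw [mem_range] at hi
      simp only [mem_insert, mem_singleton, not_or] at hni
      obtain ⟨hn0, hnh, hnt⟩ := hni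
      obtain ⟨m, hm⟩ := four_dvd_choose_pow k i hk (Nat.pos_of_ne_zero hn0) (by omega) hnh
      rw [hm]
      push_cast
      rw [mul_pow]
      have : ((4 : ZMod 8))^2 = 0 := by decide
      rw [this, zero_mul]

/-- For `k ≥ 2`, the central binomial coefficient `C(2^k, 2^(k-1))`
is congruent to `6` modulo `8`; in particular `C(2^k, 2^(k-1)) - 2` is not a
multiple of `8`. -/
theorem central_binom_mod_eight (k : ℕ) (hk : 2 ≤ k) :
    Nat.choose (2 ^ k) (2 ^ (k - 1)) % 8 = 6 ∧
    ¬ (8 : ℤ) ∣ ((Nat.choose (2 ^ k) (2 ^ (k - 1)) : ℤ) - 2) := by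
  have h := main_mod k hk
  exact ⟨h, by omega⟩
end

section
/- Let n = 2^k with k ≥ 3, and let r be an integer with 0 ≤ r ≤ n and r not equal to 0, n/2, or n. Then 4 divides the binomial coefficient C(n, r). -/
/-- For `n = 2^k` with `k ≥ 3` and `0 ≤ r ≤ n` with `r ∉ {0, n/2, n}`,
`4` divides `C(n, r)`. -/
theorem four_dvd_choose (k : ℕ) (hk : 3 ≤ k) (r : ℕ) (hr : r ≤ 2 ^ k)
    (h0 : r ≠ 0) (hmid : r ≠ 2 ^ (k - 1)) (htop : r ≠ 2 ^ k) :
    4 ∣ Nat.choose (2 ^ k) r := by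
  obtain ⟨a, m, hm, hrm⟩ := Nat.exists_eq_pow_mul_and_not_dvd h0 2 (by norm_num)
  have hm0 : m ≠ 0 := by rintro rfl; simp at hrm; exact h0 hrm
  -- a ≤ k - 2
  have ha : a ≤ k - 2 := by
    by_contra hab
    push_neg at hab
    have h1 : 2 ^ (k - 1) ∣ r := by
      rw [hrm]
      exact Dvd.dvd.mul_right (pow_dvd_pow 2 (by omega)) m
    obtain ⟨t, ht⟩ := h1
    have hk2 : 2 ^ k = 2 ^ (k - 1) * 2 := by
      rw [← pow_succ]; congr 1; omega
    have hpos : 0 < 2 ^ (k - 1) := Nat.pow_pos (by norm_num)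
    have ht2 : t ≤ 2 := by
      by_contra htc
      have : 2 ^ k < r := by rw [ht, hk2]; exact (Nat.mul_lt_mul_left hpos).mpr (by omega)
      omega
    interval_cases t
    · omega
    · exact hmid (by omega)
    · exact htop (by rw [ht, hk2])
  -- key identity
  have key : r * Nat.choose (2 ^ k) r = 2 ^ k * Nat.choose (2 ^ k - 1) (r - 1) := by
    obtain ⟨r', rfl⟩ := Nat.exists_eq_succ_of_ne_zero h0
    have hn : 2 ^ k = (2 ^ k - 1) + 1 := by
      have : 0 < 2 ^ k := Nat.pow_pos (by norm_num)
      omega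
    have hn' : (2 ^ k - 1).succ = 2 ^ k := by omega
    have h := Nat.add_one_mul_choose_eq (2 ^ k - 1) r'
    rw [← hn] at h
    simp only [Nat.succ_sub_one]
    rw [h, Nat.succ_eq_add_one]; ring
  have hdvd : 2 ^ k ∣ 2 ^ a * (m * Nat.choose (2 ^ k) r) := by
    rw [← mul_assoc, ← hrm, key]; exact Dvd.intro _ rfl
  have h2 : 2 ^ (k - a) ∣ m * Nat.choose (2 ^ k) r := by
    have : 2 ^ k = 2 ^ a * 2 ^ (k - a) := by rw [← pow_add]; congr 1; omega
    refine (Nat.mul_dvd_mul_iff_left ((Nat.pow_pos (show 0 < 2 by norm_num) : 0 < 2 ^ a))).mp ?_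
    rw [← pow_add, show a + (k - a) = k by omega]
    exact hdvd
  have hcop : Nat.Coprime (2 ^ (k - a)) m :=
    Nat.Coprime.pow_left _ ((Nat.prime_two.coprime_iff_not_dvd).mpr hm)
  have h3 : 2 ^ (k - a) ∣ Nat.choose (2 ^ k) r := hcop.dvd_of_dvd_mul_left h2
  calc (4 : ℕ) = 2 ^ 2 := by norm_num
    _ ∣ 2 ^ (k - a) := pow_dvd_pow 2 (by omega)
    _ ∣ _ := h3
end

section
/- Let F₂ be the free group on x, y, let n ≥ 1, and let z ∈ F₂' (the commutator subgroup) be a product of two n-th powers, z = aⁿbⁿ with a, b ∈ F₂. Then the winding invariant P_z ∈ Z[X^{±1}, Y^{±1}] is divisible by 1 + m + m² + ... + m^{n-1} for some monomial m = X^i Y^j (with i, j ∈ Z). -/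
/-- The free group on two generators `x = of true`, `y = of false`. -/
abbrev F2 := FreeGroup Bool
/-- The generator `x`. -/
def xx : F2 := FreeGroup.of true
/-- The generator `y`. -/
def yy : F2 := FreeGroup.of false
/-- The ring of Laurent polynomials `ℤ[X^{±1}, Y^{±1}]`. -/
abbrev L := AddMonoidAlgebra ℤ (ℤ × ℤ)
/-- The monomial `X^i Y^j`. -/
noncomputable def mono (i j : ℤ) : L := AddMonoidAlgebra.single (i, j) 1
/-- Total exponent of `x` in a word of `F2`. -/
def expx (u : F2) : ℤ :=
  Multiplicative.toAdd (FreeGroup.lift (fun b => Multiplicative.ofAdd (if b then (1 : ℤ) else 0)) u)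
/-- Total exponent of `y` in a word of `F2`. -/
def expy (u : F2) : ℤ :=
  Multiplicative.toAdd (FreeGroup.lift (fun b => Multiplicative.ofAdd (if b then (0 : ℤ) else 1)) u)

noncomputable def phix : F2 →* Multiplicative ℤ :=
  FreeGroup.lift (fun b => Multiplicative.ofAdd (if b then (1 : ℤ) else 0))
noncomputable def phiy : F2 →* Multiplicative ℤ :=
  FreeGroup.lift (fun b => Multiplicative.ofAdd (if b then (0 : ℤ) else 1))

lemma expx_eq (u : F2) : expx u = Multiplicative.toAdd (phix u) := rfl
lemma expy_eq (u : F2) : expy u = Multiplicative.toAdd (phiy u) := rfl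

lemma expx_mul (u v : F2) : expx (u * v) = expx u + expx v := by
  simp [expx_eq, map_mul]
lemma expx_pow (u : F2) (k : ℕ) : expx (u ^ k) = k * expx u := by
  simp [expx_eq, map_pow, toAdd_pow, mul_comm]
lemma expy_mul (u v : F2) : expy (u * v) = expy u + expy v := by
  simp [expy_eq, map_mul]
lemma expy_pow (u : F2) (k : ℕ) : expy (u ^ k) = k * expy u := by
  simp [expy_eq, map_pow, toAdd_pow, mul_comm]

lemma mem_commutator_of_exp (u : F2) (hx : expx u = 0) (hy : expy u = 0) :
    u ∈ commutator F2 := by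
  set A := Abelianization F2
  set g : F2 →* A :=
    ((zpowersHom A (Abelianization.of xx)).comp phix) *
    ((zpowersHom A (Abelianization.of yy)).comp phiy) with hg
  have hgof : g = Abelianization.of := by
    apply FreeGroup.ext_hom
    intro c
    cases c <;>
      simp [hg, phix, phiy, MonoidHom.mul_apply, zpowersHom_apply, xx, yy]
  have h1 : phix u = 1 := by
    have := hx; rw [expx_eq] at this
    exact Multiplicative.toAdd.injective (by simpa using this)
  have h2 : phiy u = 1 := by
    have := hy; rw [expy_eq] at this
    exact Multiplicative.toAdd.injective (by simpa using this)
  have : Abelianization.of u = 1 := by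
    rw [← hgof]
    simp [hg, MonoidHom.mul_apply, h1, h2]
  exact (QuotientGroup.eq_one_iff u).mp this

lemma exp_of_commutator (u : F2) (h : u ∈ commutator F2) : expx u = 0 ∧ expy u = 0 := by
  constructor
  · have := Abelianization.commutator_subset_ker phix h
    rw [expx_eq, MonoidHom.mem_ker.mp this]; rfl
  · have := Abelianization.commutator_subset_ker phiy h
    rw [expy_eq, MonoidHom.mem_ker.mp this]; rfl

open scoped commutatorElement

/-- If `z ∈ F₂'` is a product of two `n`-th powers, then its winding
invariant `W z` is divisible by `1 + m + m² + … + m^{n-1}` for some monomial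
`m = X^i Y^j`. Here `W` is the winding invariant, characterized as the
homomorphism with `W([x,y]) = 1` and the conjugation formula. -/
theorem winding_of_product_of_two_nth_powers
    (W : commutator F2 → L)
    (hadd : ∀ z w : commutator F2, W (z * w) = W z + W w)
    (hcomm : ∀ h : ⁅xx, yy⁆ ∈ commutator F2, W ⟨⁅xx, yy⁆, h⟩ = 1)
    (hconj : ∀ (u : F2) (z : commutator F2) (h : u * ↑z * u⁻¹ ∈ commutator F2),
      W ⟨u * ↑z * u⁻¹, h⟩ = mono (expx u) (expy u) * W z)
    (n : ℕ) (hn : 1 ≤ n) (z : commutator F2) (a b : F2)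
    (hz : (z : F2) = a ^ n * b ^ n) :
    ∃ i j : ℤ, (∑ t ∈ Finset.range n, (mono i j) ^ t) ∣ W z := by
  obtain ⟨hzx, hzy⟩ := exp_of_commutator (z : F2) z.2
  have hnz : (n : ℤ) ≠ 0 := by exact_mod_cast (Nat.pos_of_ne_zero (by omega)).ne'
  have hx0 : expx a + expx b = 0 := by
    have : (n : ℤ) * (expx a + expx b) = 0 := by
      have := hzx; rw [hz, expx_mul, expx_pow, expx_pow] at this; linarith
    exact (mul_eq_zero.mp this).resolve_left hnz
  have hy0 : expy a + expy b = 0 := by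
    have : (n : ℤ) * (expy a + expy b) = 0 := by
      have := hzy; rw [hz, expy_mul, expy_pow, expy_pow] at this; linarith
    exact (mul_eq_zero.mp this).resolve_left hnz
  have hmem : ∀ k : ℕ, a ^ k * b ^ k ∈ commutator F2 := by
    intro k
    refine mem_commutator_of_exp _ ?_ ?_
    · rw [expx_mul, expx_pow, expx_pow, ← mul_add, hx0, mul_zero]
    · rw [expy_mul, expy_pow, expy_pow, ← mul_add, hy0, mul_zero]
  have hmem1 : a * b ∈ commutator F2 := by simpa using hmem 1
  set m : L := mono (expx a) (expy a) with hm
  have key : ∀ k : ℕ, W ⟨a ^ (k + 1) * b ^ (k + 1), hmem (k + 1)⟩ =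
      (∑ t ∈ Finset.range (k + 1), m ^ t) * W ⟨a * b, hmem1⟩ := by
    intro k
    induction k with
    | zero =>
      have : (⟨a ^ 1 * b ^ 1, hmem 1⟩ : commutator F2) = ⟨a * b, hmem1⟩ := by
        exact Subtype.ext (by simp)
      rw [this]; simp
    | succ k ih =>
      have hc : a * ↑(⟨a ^ (k + 1) * b ^ (k + 1), hmem (k + 1)⟩ : commutator F2) * a⁻¹ ∈
          commutator F2 :=
        (Subgroup.commutator_normal ⊤ ⊤).conj_mem _ (hmem (k + 1)) a
      have heq : (⟨a ^ (k + 1 + 1) * b ^ (k + 1 + 1), hmem (k + 1 + 1)⟩ : commutator F2) =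
          ⟨a * (a ^ (k + 1) * b ^ (k + 1)) * a⁻¹, hc⟩ * ⟨a * b, hmem1⟩ := by
        refine Subtype.ext ?_
        show a ^ (k + 1 + 1) * b ^ (k + 1 + 1) = a * (a ^ (k + 1) * b ^ (k + 1)) * a⁻¹ * (a * b)
        group
      rw [heq, hadd, hconj a ⟨a ^ (k + 1) * b ^ (k + 1), hmem (k + 1)⟩ hc, ih, geom_sum_succ, geom_sum_succ, geom_sum_succ, ← hm]
      ring
  obtain ⟨k, rfl⟩ : ∃ k, n = k + 1 := ⟨n - 1, (Nat.succ_pred_eq_of_pos hn).symm⟩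
  refine ⟨expx a, expy a, ?_⟩
  have hzeq : z = ⟨a ^ (k + 1) * b ^ (k + 1), hmem (k + 1)⟩ := Subtype.ext hz
  rw [hzeq, key k]
  exact Dvd.intro _ rfl
end

section
/- For every m ≥ 1, the winding invariant of the m-th Engel word e_m satisfies W(e_m) = −(Y − 1)^{m−1} in Z[X^{±1}, Y^{±1}]. -/
open scoped commutatorElement

/-- The Engel words: `engel 0 = e₁ = [y,x]` and `engel m = e_{m+1} = [y, e_m]`. -/
def engel : ℕ → F2
  | 0 => ⁅yy, xx⁆
  | m + 1 => ⁅yy, engel m⁆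

/-- For every `m ≥ 1`, `W(e_m) = -(Y-1)^{m-1}` (here `engel m`
denotes `e_{m+1}`, so the claim reads `W(engel m) = -(Y-1)^m`). -/
theorem winding_of_engel_words
    (W : commutator F2 → L)
    (hadd : ∀ z w : commutator F2, W (z * w) = W z + W w)
    (hcomm : ∀ h : ⁅xx, yy⁆ ∈ commutator F2, W ⟨⁅xx, yy⁆, h⟩ = 1)
    (hconj : ∀ (u : F2) (z : commutator F2) (h : u * ↑z * u⁻¹ ∈ commutator F2),
      W ⟨u * ↑z * u⁻¹, h⟩ = mono (expx u) (expy u) * W z) :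
    ∀ m : ℕ, ∃ h : engel m ∈ commutator F2,
      W ⟨engel m, h⟩ = -((mono 0 1) - 1) ^ m := by

  have hmem : ∀ a b : F2, ⁅a, b⁆ ∈ commutator F2 := fun a b => by
    rw [commutator_def]
    exact Subgroup.commutator_mem_commutator (Subgroup.mem_top a) (Subgroup.mem_top b)
  have hW1 : W 1 = 0 := by
    have h := hadd 1 1
    rw [mul_one] at h
    exact (left_eq_add.mp h)
  have hinv : ∀ z : commutator F2, W z⁻¹ = -W z := by
    intro z
    have h := hadd z z⁻¹
    rw [mul_inv_cancel, hW1] at h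
    exact eq_neg_of_add_eq_zero_right h.symm
  have hexpx : expx yy = 0 := by simp [expx, yy]
  have hexpy : expy yy = 1 := by simp [expy, yy]
  have key : ∀ (z : commutator F2) (h : ⁅yy, (z : F2)⁆ ∈ commutator F2),
      W ⟨⁅yy, (z : F2)⁆, h⟩ = (mono 0 1 - 1) * W z := by
    intro z h
    have h1 : yy * (z : F2) * yy⁻¹ ∈ commutator F2 :=
      Subgroup.Normal.conj_mem inferInstance _ z.2 yy
    have heq : (⟨⁅yy, (z : F2)⁆, h⟩ : commutator F2)
        = ⟨yy * (z : F2) * yy⁻¹, h1⟩ * z⁻¹ := by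
      apply Subtype.ext
      simp [commutatorElement_def, mul_assoc]
    rw [heq, hadd, hconj, hinv, hexpx, hexpy]
    ring
  intro m
  induction m with
  | zero =>
    refine ⟨hmem yy xx, ?_⟩
    have heq : (⟨engel 0, hmem yy xx⟩ : commutator F2)
        = (⟨⁅xx, yy⁆, hmem xx yy⟩ : commutator F2)⁻¹ := by
      apply Subtype.ext
      simp [engel, commutatorElement_def, mul_assoc]
    rw [heq, hinv, hcomm]
    simp
  | succ m ih =>
    obtain ⟨hm, hWm⟩ := ih
    refine ⟨hmem yy (engel m), ?_⟩
    have heq : (⟨engel (m+1), hmem yy (engel m)⟩ : commutator F2)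
        = ⟨⁅yy, ((⟨engel m, hm⟩ : commutator F2) : F2)⁆, hmem yy (engel m)⟩ := rfl
    rw [heq, key ⟨engel m, hm⟩ (hmem yy (engel m)), hWm]
    ring
end

section
/- Let n be a positive integer divisible by 4, write n = 2^k q with q odd and k ≥ 2, and let h : F₂' → Z_{2^k} be a horizontal invariant associated to a good coloring of Z_{2^k}. Then h([x,y]^{n/2}) = 2^{k−1} ≠ 0 in Z_{2^k}. -/
open scoped commutatorElement

/-- Let `4 ∣ n`, `n = 2^k q` with `q` odd and `k ≥ 2`, and let
`h` be the horizontal invariant associated to a good coloring `c` of `Z_{2^k}`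
(black = `true`): `h(z) = Σ_{(i,j)} ε(j)·W(z){(i,j)} mod 2^k` with `ε(j) = +1`
iff `c(j mod 2^k)` is black.  Then `h([x,y]^{n/2}) = 2^{k-1} ≠ 0` in `Z_{2^k}`. -/
theorem horizontal_invariant_of_commutator_power
    (W : commutator F2 → L)
    (hadd : ∀ z w : commutator F2, W (z * w) = W z + W w)
    (hcomm : ∀ h : ⁅xx, yy⁆ ∈ commutator F2, W ⟨⁅xx, yy⁆, h⟩ = 1)
    (hconj : ∀ (u : F2) (z : commutator F2) (h : u * ↑z * u⁻¹ ∈ commutator F2),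
      W ⟨u * ↑z * u⁻¹, h⟩ = mono (expx u) (expy u) * W z)
    (n k q : ℕ) (hk : 2 ≤ k) (hq : Odd q) (hn : n = 2 ^ k * q)
    (c : ZMod (2 ^ k) → Bool)
    (hc : ∀ a : ZMod (2 ^ k), c (a + ((2 ^ (k - 1) : ℕ) : ZMod (2 ^ k))) ≠ c a)
    (hinv : commutator F2 → ZMod (2 ^ k))
    (hhinv : ∀ z : commutator F2,
      hinv z = Finsupp.sum (W z).coeff fun p a =>
        if c ((p.2 : ZMod (2 ^ k))) then (a : ZMod (2 ^ k)) else -(a : ZMod (2 ^ k))) :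
    ∀ hm : ⁅xx, yy⁆ ∈ commutator F2,
      hinv ((⟨⁅xx, yy⁆, hm⟩ : commutator F2) ^ (n / 2)) =
        ((2 ^ (k - 1) : ℕ) : ZMod (2 ^ k)) ∧
      ((2 ^ (k - 1) : ℕ) : ZMod (2 ^ k)) ≠ 0 := by
  intro hm
  set z : commutator F2 := ⟨⁅xx, yy⁆, hm⟩ with hz
  -- W of a power
  have hW1 : W 1 = 0 := by
    have h1 := hadd 1 1
    rw [mul_one] at h1
    exact (left_eq_add.mp h1)
  have hWpow : ∀ m : ℕ, W (z ^ m) = (m : ℤ) • (1 : L) := by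
    intro m
    induction m with
    | zero => simpa using hW1
    | succ m ih =>
        rw [pow_succ, hadd, ih, hcomm hm]
        push_cast
        rw [add_smul, one_smul]
  -- compute n/2
  obtain ⟨t, ht⟩ := hq
  have hk1 : 1 ≤ k := le_trans (by norm_num) hk
  have hn2 : n / 2 = 2 ^ (k - 1) * q := by
    subst hn
    have : 2 ^ k = 2 * 2 ^ (k - 1) := by
      rw [← pow_succ']
      congr 1
      omega
    rw [this, mul_assoc, Nat.mul_div_cancel_left _ (by norm_num)]
  have hnat : 2 ^ (k - 1) * q = 2 ^ k * t + 2 ^ (k - 1) := by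
    rw [ht, show 2 ^ k = 2 ^ (k - 1) * 2 from by rw [← pow_succ]; congr 1; omega]
    ring
  have hmval : ((n / 2 : ℕ) : ZMod (2 ^ k)) = ((2 ^ (k - 1) : ℕ) : ZMod (2 ^ k)) := by
    rw [hn2, hnat, Nat.cast_add, Nat.cast_mul, ZMod.natCast_self, zero_mul, zero_add]
  have hneg : -((2 ^ (k - 1) : ℕ) : ZMod (2 ^ k)) = ((2 ^ (k - 1) : ℕ) : ZMod (2 ^ k)) := by
    have : ((2 ^ (k - 1) : ℕ) : ZMod (2 ^ k)) + ((2 ^ (k - 1) : ℕ) : ZMod (2 ^ k)) = 0 := by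
      rw [← Nat.cast_add]
      have : 2 ^ (k - 1) + 2 ^ (k - 1) = 2 ^ k := by
        rw [← two_mul, ← pow_succ']
        congr 1
        omega
      rw [this, ZMod.natCast_self]
    linear_combination -this
  constructor
  · rw [hhinv, hWpow]
    have hone : (((n / 2 : ℕ) : ℤ) • (1 : L)).coeff
        = Finsupp.single ((0, 0) : ℤ × ℤ) ((n / 2 : ℕ) : ℤ) := by
      rw [AddMonoidAlgebra.coeff_smul, show (1 : L).coeff = Finsupp.single ((0, 0) : ℤ × ℤ) (1 : ℤ) from rfl,
        Finsupp.smul_single, smul_eq_mul, mul_one]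
    rw [hone, Finsupp.sum_single_index (by simp)]
    simp only [Int.cast_zero, Int.cast_natCast]
    by_cases hc0 : c (0 : ZMod (2 ^ k))
    · rw [if_pos hc0]
      exact hmval
    · rw [if_neg hc0, hmval, hneg]
  · intro h0
    rw [ZMod.natCast_eq_zero_iff] at h0
    have hle : 2 ^ k ≤ 2 ^ (k - 1) := Nat.le_of_dvd (by positivity) h0
    have hlt : 2 ^ (k - 1) < 2 ^ k := Nat.pow_lt_pow_right (by norm_num) (by omega)
    omega
end

section
/- Let n = 2^k with k ≥ 3, and let h⁰ : Z[X^{±1}, Y^{±1}] → Z_n be the linear map sending a Laurent polynomial P to Σ_{(i,j)} ε(j) P{(i,j)} mod n, where ε(j) = +1 if j mod n ∈ {0, 1, ..., n/2 − 1} and ε(j) = −1 otherwise. Then h⁰(−(Y−1)^n) = C(n, n/2) − 2 in Z_n, and this element is not a multiple of 8. -/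
open Finset Polynomial

section aux

lemma aux_four_eq_zero : (4 : (ZMod 4)[X]) = 0 := by
  have h : ((4:ℕ) : (ZMod 4)[X]) = 0 := by
    rw [← map_natCast (Polynomial.C : ZMod 4 →+* (ZMod 4)[X]) 4]
    norm_num; rfl
  exact_mod_cast h

lemma aux_pow_mod4 (m : ℕ) :
    ((X + 1 : (ZMod 4)[X])) ^ (2 ^ (m + 1)) = X ^ (2 ^ (m + 1)) + 2 * X ^ (2 ^ m) + 1 := by
  induction m with
  | zero => ring
  | succ m ih =>
    have e1 : (2 : ℕ) ^ (m + 2) = 2 ^ (m + 1) * 2 := by ring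
    calc (X + 1 : (ZMod 4)[X]) ^ (2 ^ (m + 2))
        = ((X + 1) ^ (2 ^ (m + 1))) ^ 2 := by rw [e1, pow_mul]
      _ = (X ^ (2 ^ (m + 1)) + 2 * X ^ (2 ^ m) + 1) ^ 2 := by rw [ih]
      _ = X ^ (2 ^ (m + 2)) + 2 * X ^ (2 ^ (m + 1)) + 1 := by
          rw [e1, pow_mul]
          have h2 : (X : (ZMod 4)[X]) ^ (2 ^ (m+1)) = (X ^ (2^m)) ^ 2 := by
            rw [← pow_mul]; ring_nf
          rw [h2]
          linear_combination (X ^ (2^m) * ((X^(2^m))^2 + X^(2^m) + 1) : (ZMod 4)[X]) * aux_four_eq_zero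

lemma aux_choose_mod4_mid (m : ℕ) : ((Nat.choose (2 ^ (m+1)) (2 ^ m) : ℕ) : ZMod 4) = 2 := by
  have h := congrArg (fun P => Polynomial.coeff P (2 ^ m)) (aux_pow_mod4 m)
  have hne : (2:ℕ) ^ (m+1) ≠ 2 ^ m := by
    intro h'; exact absurd (Nat.pow_right_injective le_rfl h') (by omega)
  have hne0 : (2:ℕ) ^ m ≠ 0 := by positivity
  simpa [coeff_X_add_one_pow, coeff_one, coeff_X_pow, hne.symm, hne0, coeff_ofNat_mul] using h

lemma aux_choose_mod4_other (m i : ℕ) (h0 : i ≠ 0) (hmid : i ≠ 2 ^ m) (htop : i ≠ 2 ^ (m+1)) :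
    ((Nat.choose (2 ^ (m+1)) i : ℕ) : ZMod 4) = 0 := by
  have h := congrArg (fun P => Polynomial.coeff P i) (aux_pow_mod4 m)
  simpa [coeff_X_add_one_pow, coeff_one, coeff_X_pow, htop, hmid, h0, coeff_ofNat_mul] using h

lemma aux_sq_mod8 (c : ℕ) : ((c : ZMod 8))^2 = (((c % 4 : ℕ)) : ZMod 8)^2 := by
  have h8 : (8 : ZMod 8) = 0 := by decide
  have hc : c = 4 * (c / 4) + c % 4 := (Nat.div_add_mod c 4).symm
  set q := c / 4; set r := c % 4
  calc ((c : ZMod 8))^2 = ((4 * q + r : ℕ) : ZMod 8)^2 := by rw [← hc]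
    _ = ((r:ℕ) : ZMod 8)^2 := by
        push_cast
        linear_combination ((2*(q:ZMod 8)^2 + (q:ZMod 8)*(r:ZMod 8))) * h8

lemma aux_central_mod8 (m : ℕ) : ((Nat.choose (2 ^ (m+2)) (2 ^ (m+1)) : ℕ) : ZMod 8) = 6 := by
  set a := 2 ^ (m+1) with ha
  have hvd : Nat.choose (a + a) a = ∑ i ∈ range (a+1), Nat.choose a i * Nat.choose a (a - i) := by
    rw [Nat.add_choose_eq, Finset.Nat.sum_antidiagonal_eq_sum_range_succ_mk]
  have hsum : ((Nat.choose (2 ^ (m+2)) a : ℕ) : ZMod 8)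
      = ∑ i ∈ range (a+1), ((Nat.choose a i : ℕ) : ZMod 8)^2 := by
    have h2 : (2:ℕ) ^ (m+2) = a + a := by rw [ha]; ring
    rw [h2, hvd]
    push_cast
    refine Finset.sum_congr rfl fun i hi => ?_
    rw [Nat.choose_symm (by simpa using Nat.lt_succ_iff.mp (mem_range.mp hi))]
    ring
  rw [hsum]
  have hm0 : (0:ℕ) < 2 ^ m := by positivity
  have hmlt : (2:ℕ) ^ m < a := by rw [ha]; exact Nat.pow_lt_pow_right (by omega) (by omega)
  have key : ∀ i ∈ range (a+1), i ∉ ({0, 2^m, a} : Finset ℕ) →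
      ((Nat.choose a i : ℕ) : ZMod 8)^2 = 0 := by
    intro i _ hi
    simp only [mem_insert, mem_singleton, not_or] at hi
    obtain ⟨h0, hmid, htop⟩ := hi
    have h4 : ((Nat.choose a i : ℕ) : ZMod 4) = 0 := aux_choose_mod4_other m i h0 hmid htop
    have : (Nat.choose a i) % 4 = 0 := by
      have := (ZMod.natCast_eq_zero_iff (Nat.choose a i) 4).mp h4
      omega
    rw [aux_sq_mod8, this]
    decide
  have hsub : ({0, 2^m, a} : Finset ℕ) ⊆ range (a+1) := by
    intro i hi
    simp only [mem_insert, mem_singleton] at hi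
    rcases hi with rfl | rfl | rfl <;> simp [mem_range] <;> omega
  rw [← Finset.sum_subset hsub (fun i hi hni => key i hi hni)]
  have hmidval : (Nat.choose a (2^m)) % 4 = 2 := by
    have h := aux_choose_mod4_mid m
    have hv : (Nat.choose a (2^m)) % 4 = ((Nat.choose a (2^m) : ℕ) : ZMod 4).val :=
      (ZMod.val_natCast _ _).symm
    rw [hv, h]; decide
  rw [Finset.sum_insert (by simp; omega), Finset.sum_insert (by simp; omega),
    Finset.sum_singleton]
  rw [aux_sq_mod8 (Nat.choose a (2^m)), hmidval]
  simp [Nat.choose_self]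
  decide

lemma aux_parity_pow {m i : ℕ} (h : i ≤ m) (hm : Even m) : (-1:ℤ)^(m - i) = (-1)^i := by
  rcases Nat.even_or_odd i with hi | hi
  · rw [((Nat.even_sub h).mpr (iff_of_true hm hi)).neg_one_pow, hi.neg_one_pow]
  · rw [(Nat.Even.sub_odd h hm hi).neg_one_pow, hi.neg_one_pow]

lemma aux_intSum (m : ℕ) (hm : Even m) (h1 : 1 ≤ m) :
    ∑ i ∈ range (2*m+1),
      (if i % (2*m) < m then -((-1:ℤ)^(2*m-i) * (Nat.choose (2*m) i))
       else (-1:ℤ)^(2*m-i) * (Nat.choose (2*m) i))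
    = (Nat.choose (2*m) m : ℤ) - 2 := by
  set f : ℕ → ℤ := fun i => (-1:ℤ)^i * (Nat.choose (2*m) i) with hf
  have hm2 : Even (2*m) := even_two_mul m
  have htot : ∑ i ∈ range (2*m+1), f i = 0 := by
    rw [hf]
    rw [Int.alternating_sum_range_choose]
    simp; omega
  set A : ℤ := ∑ i ∈ range m, f i with hA
  have hrefl : ∑ i ∈ Ico (m+1) (2*m+1), f i = A := by
    rw [Finset.sum_Ico_eq_sum_range]
    have h2 : 2*m+1 - (m+1) = m := by omega
    rw [h2]
    have h3 : ∀ j ∈ range m, f (m + 1 + (m - 1 - j)) = f j := by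
      intro j hj
      have hjm : j < m := mem_range.mp hj
      have he : m + 1 + (m - 1 - j) = 2*m - j := by omega
      rw [he, hf]
      simp only
      rw [aux_parity_pow (by omega) hm2, Nat.choose_symm (by omega)]
    calc ∑ j ∈ range m, f (m + 1 + j)
        = ∑ j ∈ range m, f (m + 1 + (m - 1 - j)) := (Finset.sum_range_reflect _ m).symm
      _ = ∑ j ∈ range m, f j := Finset.sum_congr rfl h3
  have hfm : f m = (Nat.choose (2*m) m : ℤ) := by
    rw [hf]; simp [hm.neg_one_pow]
  have h2A : 2 * A = -(Nat.choose (2*m) m : ℤ) := by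
    have hsplit : ∑ i ∈ range (2*m+1), f i
        = A + (f m + ∑ i ∈ Ico (m+1) (2*m+1), f i) := by
      rw [hA, Finset.range_eq_Ico]
      rw [← Finset.sum_Ico_consecutive f (by omega : 0 ≤ m) (by omega : m ≤ 2*m+1)]
      congr 1
      · rw [Finset.range_eq_Ico]
      rw [← Finset.sum_Ico_consecutive f (by omega : m ≤ m+1) (by omega : m+1 ≤ 2*m+1)]
      congr 1
      rw [Finset.sum_Ico_eq_sum_range]
      simp
    rw [htot, hrefl, hfm] at hsplit
    linarith
  have hcond : ∀ i < 2*m, (i % (2*m) < m ↔ i < m) := by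
    intro i hi; rw [Nat.mod_eq_of_lt hi]
  rw [Finset.sum_range_succ]
  have hlast : (if (2*m) % (2*m) < m then -((-1:ℤ)^(2*m-2*m) * (Nat.choose (2*m) (2*m)))
       else (-1:ℤ)^(2*m-2*m) * (Nat.choose (2*m) (2*m))) = -1 := by
    rw [if_pos (by simp; omega)]
    simp
  rw [hlast]
  have hmain : ∑ i ∈ range (2*m),
      (if i % (2*m) < m then -((-1:ℤ)^(2*m-i) * (Nat.choose (2*m) i))
       else (-1:ℤ)^(2*m-i) * (Nat.choose (2*m) i))
      = -A + (-A - 1) := by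
    have hsplit2 : ∑ i ∈ range (2*m),
        (if i % (2*m) < m then -((-1:ℤ)^(2*m-i) * (Nat.choose (2*m) i))
         else (-1:ℤ)^(2*m-i) * (Nat.choose (2*m) i))
       = (∑ i ∈ Ico 0 m, -(f i)) + ∑ i ∈ Ico m (2*m), f i := by
      rw [Finset.range_eq_Ico,
        ← Finset.sum_Ico_consecutive _ (by omega : 0 ≤ m) (by omega : m ≤ 2*m)]
      congr 1
      · refine Finset.sum_congr rfl fun i hi => ?_
        have him : i < m := (mem_Ico.mp hi).2
        rw [if_pos (by rw [Nat.mod_eq_of_lt (by omega)]; omega)]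
        rw [hf]; simp only
        rw [aux_parity_pow (by omega) hm2]
      · refine Finset.sum_congr rfl fun i hi => ?_
        obtain ⟨hil, hiu⟩ := mem_Ico.mp hi
        rw [if_neg (by rw [Nat.mod_eq_of_lt hiu]; omega)]
        rw [hf]; simp only
        rw [aux_parity_pow (by omega) hm2]
    rw [hsplit2]
    have e1 : ∑ i ∈ Ico 0 m, -(f i) = -A := by
      rw [Nat.Ico_zero_eq_range, ← Finset.sum_neg_distrib]
    have e2 : ∑ i ∈ Ico m (2*m), f i = -A - 1 := by
      have hstep : ∑ i ∈ Ico m (2*m), f i + f (2*m) = f m + ∑ i ∈ Ico (m+1) (2*m+1), f i := by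
        rw [← Finset.sum_Ico_succ_top (by omega : m ≤ 2*m) f,
          Finset.sum_eq_sum_Ico_succ_bot (by omega : m < 2*m+1) f]
      rw [hrefl, hfm] at hstep
      have hf2m : f (2*m) = 1 := by rw [hf]; simp [hm2.neg_one_pow]
      rw [hf2m] at hstep
      linarith
    rw [e1, e2]
  rw [hmain]
  linarith

lemma aux_negone_def : ((-1 : L)) = AddMonoidAlgebra.single 0 (-1) := by
  have h : ((-1 : ℤ) : L) = AddMonoidAlgebra.single 0 ((-1 : ℤ) : ℤ) :=
    AddMonoidAlgebra.intCast_def _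
  simpa [Int.cast_id] using h

lemma aux_expandL (n : ℕ) : ((AddMonoidAlgebra.single ((0:ℤ),(1:ℤ)) (1:ℤ) : L) - 1) ^ n
    = ∑ i ∈ range (n+1),
        AddMonoidAlgebra.single ((0:ℤ),(i:ℤ)) ((-1)^(n-i) * (Nat.choose n i : ℤ)) := by
  rw [sub_eq_add_neg, add_pow]
  refine Finset.sum_congr rfl fun i hi => ?_
  rw [AddMonoidAlgebra.single_pow, aux_negone_def, AddMonoidAlgebra.single_pow,
    AddMonoidAlgebra.natCast_def, AddMonoidAlgebra.single_mul_single,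
    AddMonoidAlgebra.single_mul_single]
  norm_num

end aux

/-- For `n = 2^k`, `k ≥ 3`, and the map `h⁰ : ℤ[X^±,Y^±] → Z_n`
sending `P` to `Σ ε(j) P{(i,j)}` with `ε(j) = +1` iff `j mod n ∈ {0,…,n/2-1}`,
one has `h⁰(-(Y-1)^n) = C(n, n/2) - 2` in `Z_n`, and this element is not a
multiple of `8`. -/
theorem h0_of_engel_polynomial (k : ℕ) (hk : 3 ≤ k)
    (h0 : L → ZMod (2 ^ k))
    (hh0 : ∀ P : L, h0 P = Finsupp.sum P.coeff fun p a =>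
      if ((p.2 : ZMod (2 ^ k))).val < 2 ^ (k - 1)
      then (a : ZMod (2 ^ k)) else -(a : ZMod (2 ^ k))) :
    h0 (-((mono 0 1) - 1) ^ (2 ^ k)) =
      ((Nat.choose (2 ^ k) (2 ^ (k - 1)) : ℕ) : ZMod (2 ^ k)) - 2 ∧
    ¬ ∃ t : ZMod (2 ^ k), h0 (-((mono 0 1) - 1) ^ (2 ^ k)) = 8 * t := by
  haveI : NeZero (2 ^ k) := ⟨by positivity⟩
  have hn2m : 2 ^ k = 2 * 2 ^ (k - 1) := by
    rw [← pow_succ']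
    congr 1; omega
  have hmeven : Even (2 ^ (k - 1)) := by
    exact (Nat.even_pow (n := k-1)).mpr ⟨even_iff_two_dvd.mpr ⟨1, rfl⟩, by omega⟩
  have hm1 : 1 ≤ 2 ^ (k - 1) := Nat.one_le_two_pow
  set f : (ℤ × ℤ) → ℤ → ZMod (2 ^ k) := fun p a =>
    if ((p.2 : ZMod (2 ^ k))).val < 2 ^ (k - 1)
    then (a : ZMod (2 ^ k)) else -(a : ZMod (2 ^ k)) with hfdef
  have hzero : ∀ p, f p 0 = 0 := by intro p; simp [hfdef]
  have hadd : ∀ p a b, f p (a + b) = f p a + f p b := by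
    intro p a b; simp only [hfdef]; split <;> push_cast <;> ring
  set φ : L →+ ZMod (2 ^ k) := AddMonoidHom.mk' (fun P => Finsupp.sum P.coeff f)
    (fun P Q => Finsupp.sum_add_index' hzero hadd) with hφ
  have hφ_single : ∀ (p : ℤ × ℤ) (a : ℤ), φ (AddMonoidAlgebra.single p a) = f p a := by
    intro p a
    exact Finsupp.sum_single_index (hzero p)
  have hmono : (mono 0 1 : L) = AddMonoidAlgebra.single ((0:ℤ),(1:ℤ)) (1:ℤ) := rfl
  have hval : h0 (-((mono 0 1) - 1) ^ (2 ^ k)) =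
      ((Nat.choose (2 ^ k) (2 ^ (k - 1)) : ℕ) : ZMod (2 ^ k)) - 2 := by
    rw [hh0]
    show φ (-((mono 0 1) - 1) ^ (2 ^ k)) = _
    rw [map_neg, hmono, aux_expandL, map_sum]
    have hterm : ∀ i ∈ range (2 ^ k + 1),
        φ (AddMonoidAlgebra.single ((0:ℤ),(i:ℤ)) ((-1)^(2 ^ k - i) * (Nat.choose (2 ^ k) i : ℤ)))
        = f ((0:ℤ),(i:ℤ)) ((-1)^(2 ^ k - i) * (Nat.choose (2 ^ k) i : ℤ)) :=
      fun i _ => hφ_single _ _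
    rw [Finset.sum_congr rfl hterm]
    have hcondval : ∀ i : ℕ, (((i:ℤ) : ZMod (2 ^ k))).val = i % (2 ^ k) := by
      intro i
      rw [Int.cast_natCast, ZMod.val_natCast]
    have hterm2 : ∀ i ∈ range (2 ^ k + 1),
        -(f ((0:ℤ),(i:ℤ)) ((-1)^(2 ^ k - i) * (Nat.choose (2 ^ k) i : ℤ)))
        = (((if i % (2 * 2 ^ (k-1)) < 2 ^ (k-1)
              then -((-1:ℤ)^(2 * 2 ^ (k-1) - i) * (Nat.choose (2 * 2 ^ (k-1)) i))
              else (-1:ℤ)^(2 * 2 ^ (k-1) - i) * (Nat.choose (2 * 2 ^ (k-1)) i)) : ℤ)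
            : ZMod (2 ^ k)) := by
      intro i _
      simp only [hfdef, hcondval, ← hn2m]
      split <;> push_cast <;> ring
    rw [← Finset.sum_neg_distrib, Finset.sum_congr rfl hterm2, ← Int.cast_sum]
    rw [show 2 ^ k + 1 = 2 * 2 ^ (k-1) + 1 by omega]
    rw [aux_intSum (2 ^ (k-1)) hmeven hm1]
    rw [← hn2m]
    push_cast
    ring
  refine ⟨hval, ?_⟩
  rintro ⟨t, ht⟩
  rw [hval] at ht
  have hdvd : (8:ℕ) ∣ 2 ^ k := by
    exact dvd_trans (by norm_num : (8:ℕ) ∣ 2^3) (pow_dvd_pow 2 hk)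
  set ψ : ZMod (2 ^ k) →+* ZMod 8 := ZMod.castHom hdvd (ZMod 8) with hψ
  have h68 : ((Nat.choose (2 ^ k) (2 ^ (k - 1)) : ℕ) : ZMod 8) = 6 := by
    have h := aux_central_mod8 (k - 2)
    rw [show k - 2 + 2 = k from by omega, show k - 2 + 1 = k - 1 from by omega] at h
    exact h
  have hcast := congrArg ψ ht
  rw [map_sub, map_mul, map_natCast, h68] at hcast
  have h8 : ψ (8 : ZMod (2 ^ k)) = 0 := by
    rw [show ((8 : ZMod (2 ^ k))) = ((8:ℕ) : ZMod (2 ^ k)) by push_cast; ring, map_natCast]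
    decide
  rw [h8, zero_mul] at hcast
  rw [show ψ 2 = 2 from map_ofNat ψ 2] at hcast
  exact absurd hcast (by decide)
end

section
/- Let F₂ be the free group of rank 2, n a positive integer, R = F₂ⁿ F₂' and S = Rⁿ R'. Then S ≤ F₂ⁿ F₂'' and the quotient F₂/S has order n^{3 + n²}. Consequently the free metabelian group M(2,n) = F₂/(F₂ⁿ F₂'') of exponent n satisfies |M(2,n)| ≤ n^{n² + 3}. -/
/-- The subgroup `F₂ⁿ` of `F₂` generated by all `n`-th powers. -/
def pw (n : ℕ) : Subgroup F2 := Subgroup.closure {g : F2 | ∃ h : F2, h ^ n = g}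
/-- The subgroup `Hⁿ` of `F₂` generated by the `n`-th powers of elements of `H`. -/
def pwOf (H : Subgroup F2) (n : ℕ) : Subgroup F2 :=
  Subgroup.closure {g : F2 | ∃ h ∈ H, h ^ n = g}

open commutatorElement

namespace MUBN

instance pw_normal (n : ℕ) : (pw n).Normal := by
  constructor
  intro x hx g
  refine Subgroup.closure_induction (fun y hy => ?_) (by simpa using one_mem _)
    (fun a b _ _ ha hb => ?_) (fun a _ ha => ?_) hx
  · obtain ⟨h, rfl⟩ := hy
    exact Subgroup.subset_closure ⟨g * h * g⁻¹, conj_pow⟩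
  · have : g * (a * b) * g⁻¹ = (g * a * g⁻¹) * (g * b * g⁻¹) := by group
    rw [this]; exact mul_mem ha hb
  · have : g * a⁻¹ * g⁻¹ = (g * a * g⁻¹)⁻¹ := by group
    rw [this]; exact inv_mem ha

instance R_normal (n : ℕ) : (pw n ⊔ commutator F2).Normal := Subgroup.sup_normal _ _

variable (n : ℕ)

abbrev Qn := ZMod n × ZMod n
abbrev Qm := Multiplicative (Qn n)

def piH : F2 →* Qm n :=
  FreeGroup.lift (fun b => Multiplicative.ofAdd (if b then ((1 : ZMod n), (0 : ZMod n)) else (0, 1)))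

def rep (t : Qn n) : F2 := xx ^ (t.1.val) * yy ^ (t.2.val)

@[simp] lemma piH_xx : piH n xx = Multiplicative.ofAdd ((1 : ZMod n), (0 : ZMod n)) := by
  simp [piH, xx]

@[simp] lemma piH_yy : piH n yy = Multiplicative.ofAdd ((0 : ZMod n), (1 : ZMod n)) := by
  simp [piH, yy]

@[simp] lemma piH_xx_pow (m : ℕ) : piH n (xx ^ m) = Multiplicative.ofAdd ((m : ZMod n), (0 : ZMod n)) := by
  rw [map_pow, piH_xx, ← ofAdd_nsmul]
  norm_num

@[simp] lemma piH_yy_pow (m : ℕ) : piH n (yy ^ m) = Multiplicative.ofAdd ((0 : ZMod n), (m : ZMod n)) := by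
  rw [map_pow, piH_yy, ← ofAdd_nsmul]
  norm_num

lemma piH_rep [NeZero n] (t : Qn n) : piH n (rep n t) = Multiplicative.ofAdd t := by
  rw [rep, map_mul, piH_xx_pow, piH_yy_pow, ← ofAdd_add]
  simp [ZMod.natCast_val, ZMod.cast_id', Prod.ext_iff]

lemma rep_zero : rep n 0 = 1 := by simp [rep]

/-- `R = ker π`. -/
lemma R_eq_ker (hn : 0 < n) : pw n ⊔ commutator F2 = (piH n).ker := by
  haveI : NeZero n := ⟨hn.ne'⟩
  apply le_antisymm
  · refine sup_le ?_ (Abelianization.commutator_subset_ker _)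
    rw [pw, Subgroup.closure_le]
    rintro g ⟨h, rfl⟩
    have : (piH n h) ^ n = 1 := by
      rw [← ofAdd_toAdd (piH n h), ← ofAdd_nsmul]
      have : n • (piH n h).toAdd = 0 := by
        ext <;> simp [nsmul_eq_mul, ZMod.natCast_self]
      rw [this, ofAdd_zero]
    simpa [MonoidHom.mem_ker] using this
  · set R := pw n ⊔ commutator F2 with hR
    have hcomm : ∀ a b : F2 ⧸ R, a * b = b * a := by
      intro a b
      induction a using QuotientGroup.induction_on with | _ a =>
      induction b using QuotientGroup.induction_on with | _ b =>
      rw [← QuotientGroup.mk_mul, ← QuotientGroup.mk_mul, QuotientGroup.eq_iff_div_mem]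
      have : a * b / (b * a) = ⁅a, b⁆ := by
        simp [commutatorElement_def, div_eq_mul_inv, mul_inv_rev, mul_assoc]
      rw [this]
      exact Subgroup.mem_sup_right
        (Subgroup.commutator_mem_commutator (Subgroup.mem_top a) (Subgroup.mem_top b))
    have hXn : (QuotientGroup.mk xx : F2 ⧸ R) ^ n = 1 := by
      rw [← QuotientGroup.mk_pow, QuotientGroup.eq_one_iff]
      exact Subgroup.mem_sup_left (Subgroup.subset_closure ⟨xx, rfl⟩)
    have hYn : (QuotientGroup.mk yy : F2 ⧸ R) ^ n = 1 := by
      rw [← QuotientGroup.mk_pow, QuotientGroup.eq_one_iff]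
      exact Subgroup.mem_sup_left (Subgroup.subset_closure ⟨yy, rfl⟩)
    have hmul : ∀ t t' : Qn n,
        (QuotientGroup.mk (rep n (t + t')) : F2 ⧸ R) =
          QuotientGroup.mk (rep n t) * QuotientGroup.mk (rep n t') := by
      rintro ⟨a, b⟩ ⟨a', b'⟩
      show (QuotientGroup.mk (xx ^ ((a + a').val) * yy ^ ((b + b').val)) : F2 ⧸ R) = _
      rw [QuotientGroup.mk_mul, QuotientGroup.mk_pow, QuotientGroup.mk_pow,
        ZMod.val_add, ZMod.val_add,
        ← pow_eq_pow_mod _ hXn, ← pow_eq_pow_mod _ hYn, pow_add, pow_add]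
      show _ = (QuotientGroup.mk (xx ^ a.val * yy ^ b.val) : F2 ⧸ R) *
        QuotientGroup.mk (xx ^ a'.val * yy ^ b'.val)
      rw [QuotientGroup.mk_mul, QuotientGroup.mk_mul, QuotientGroup.mk_pow,
        QuotientGroup.mk_pow, QuotientGroup.mk_pow, QuotientGroup.mk_pow]
      letI : CommGroup (F2 ⧸ R) := { (inferInstance : Group (F2 ⧸ R)) with mul_comm := hcomm }
      exact mul_mul_mul_comm _ _ _ _
    set τ : Qm n →* F2 ⧸ R :=
      MonoidHom.mk' (fun q => QuotientGroup.mk (rep n q.toAdd)) (fun q q' => hmul _ _) with hτ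
    have hcomp : τ.comp (piH n) = QuotientGroup.mk' R := by
      apply FreeGroup.ext_hom
      intro b
      cases b
      · rw [MonoidHom.comp_apply, QuotientGroup.mk'_apply]
        show τ (piH n yy) = QuotientGroup.mk yy
        rw [piH_yy]
        show (QuotientGroup.mk (rep n ((0 : ZMod n), (1 : ZMod n))) : F2 ⧸ R) = QuotientGroup.mk yy
        show (QuotientGroup.mk (xx ^ ((0 : ZMod n)).val * yy ^ ((1 : ZMod n)).val) : F2 ⧸ R) = _
        rw [ZMod.val_zero, pow_zero, one_mul, QuotientGroup.mk_pow]
        conv_rhs => rw [← pow_one (QuotientGroup.mk yy : F2 ⧸ R)]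
        rw [pow_eq_pow_mod 1 hYn]
        congr 1
        rw [ZMod.val_one_eq_one_mod]
      · rw [MonoidHom.comp_apply, QuotientGroup.mk'_apply]
        show τ (piH n xx) = QuotientGroup.mk xx
        rw [piH_xx]
        show (QuotientGroup.mk (rep n ((1 : ZMod n), (0 : ZMod n))) : F2 ⧸ R) = QuotientGroup.mk xx
        show (QuotientGroup.mk (xx ^ ((1 : ZMod n)).val * yy ^ ((0 : ZMod n)).val) : F2 ⧸ R) = _
        rw [ZMod.val_zero, pow_zero, mul_one, QuotientGroup.mk_pow]
        conv_rhs => rw [← pow_one (QuotientGroup.mk xx : F2 ⧸ R)]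
        rw [pow_eq_pow_mod 1 hXn]
        congr 1
        rw [ZMod.val_one_eq_one_mod]
    intro g hg
    have : QuotientGroup.mk' R g = τ (piH n g) := by rw [← hcomp]; rfl
    rw [MonoidHom.mem_ker.mp hg, map_one] at this
    exact (QuotientGroup.eq_one_iff g).mp this

end MUBN

namespace MUBN
variable (n : ℕ)

def genX (a b : ZMod n) : F2 := rep n (a, b) * xx * (rep n (a + 1, b))⁻¹
def genY (a : ZMod n) : F2 := rep n (a, -1) * yy * (rep n (a, 0))⁻¹

def gens : (Qn n ⊕ Unit) → F2
  | .inl (a, b) => if b = 0 then genY n a else genX n a b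
  | .inr _ => xx ^ n

lemma val_add_one_of_ne [NeZero n] {a : ZMod n} (h : a + 1 ≠ 0) : (a + 1).val = a.val + 1 := by
  have h1 : 1 < n := by
    rcases Nat.lt_or_ge n 2 with h2 | h2
    · interval_cases n
      · exact absurd rfl (NeZero.ne 0)
      · exact absurd (Subsingleton.elim _ _) h
    · exact h2
  have hlt : a.val + 1 < n := by
    rcases Nat.lt_or_ge (a.val + 1) n with h3 | h3
    · exact h3
    · exfalso
      have : a.val + 1 = n := le_antisymm (Nat.succ_le_of_lt (ZMod.val_lt a)) h3
      apply h
      have : ((a.val + 1 : ℕ) : ZMod n) = ((n : ℕ) : ZMod n) := by rw [this]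
      rwa [Nat.cast_add, Nat.cast_one, ZMod.natCast_val, ZMod.cast_id, ZMod.natCast_self] at this
  rw [ZMod.val_add, ZMod.val_one_eq_one_mod, Nat.mod_eq_of_lt h1, Nat.mod_eq_of_lt hlt]

lemma gens_mem_ker [NeZero n] (k : Qn n ⊕ Unit) : gens n k ∈ (piH n).ker := by
  rw [MonoidHom.mem_ker]
  rcases k with ⟨a, b⟩ | u
  · show piH n (if b = 0 then genY n a else genX n a b) = 1
    split
    · simp only [genY, map_mul, map_inv, piH_rep, piH_yy]
      rw [← ofAdd_neg, ← ofAdd_add, ← ofAdd_add]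
      rw [show ((a, -1) + ((0 : ZMod n), (1 : ZMod n)) + -((a : ZMod n), (0 : ZMod n))) = 0 by
        ext <;> simp]
      rfl
    · simp only [genX, map_mul, map_inv, piH_rep, piH_xx]
      rw [← ofAdd_neg, ← ofAdd_add, ← ofAdd_add]
      rw [show ((a, b) + ((1 : ZMod n), (0 : ZMod n)) + -((a + 1 : ZMod n), (b : ZMod n))) = 0 by
        ext <;> simp <;> ring]
      rfl
  · show piH n (xx ^ n) = 1
    rw [piH_xx_pow]
    rw [show ((n : ZMod n), (0 : ZMod n)) = 0 by ext <;> simp]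
    rfl

lemma ker_le_closure (hn : 0 < n) :
    (piH n).ker ≤ Subgroup.closure (Set.range (gens n)) := by
  haveI : NeZero n := ⟨hn.ne'⟩
  set H := Subgroup.closure (Set.range (gens n)) with hH
  intro w hw
  rw [MonoidHom.mem_ker] at hw
  have key : ∀ q : Qn n, rep n q * w * (rep n (q + (piH n w).toAdd))⁻¹ ∈ H := by
    clear hw
    induction w using FreeGroup.induction_on with
    | C1 =>
      intro q
      simp only [mul_one, map_one]
      rw [show ((1 : Qm n)).toAdd = 0 from rfl, add_zero, mul_inv_cancel]
      exact one_mem H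
    | of b =>
      intro q
      obtain ⟨a, c⟩ := q
      cases b
      · -- yy
        have hb : piH n (FreeGroup.of false) = Multiplicative.ofAdd ((0 : ZMod n), (1 : ZMod n)) :=
          piH_yy n
        rw [hb, show (Multiplicative.ofAdd ((0 : ZMod n), (1 : ZMod n))).toAdd
          = ((0 : ZMod n), (1 : ZMod n)) from rfl]
        rw [show ((a, c) + ((0 : ZMod n), (1 : ZMod n))) = (a, c + 1) by ext <;> simp]
        by_cases hc : c + 1 = 0
        · have hcm : c = -1 := eq_neg_of_add_eq_zero_left hc
          rw [hc, hcm]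
          exact Subgroup.subset_closure ⟨Sum.inl (a, 0), by simp [gens, genY, yy]⟩
        · have hval : (c + 1).val = c.val + 1 := val_add_one_of_ne n hc
          have : rep n (a, c) * FreeGroup.of false * (rep n (a, c + 1))⁻¹ = 1 := by
            rw [rep, rep, hval, pow_succ]
            show xx ^ a.val * yy ^ c.val * yy * (xx ^ a.val * (yy ^ c.val * yy))⁻¹ = 1
            group
          rw [this]
          exact one_mem H
      · -- xx
        have hb : piH n (FreeGroup.of true) = Multiplicative.ofAdd ((1 : ZMod n), (0 : ZMod n)) :=
          piH_xx n
        rw [hb, show (Multiplicative.ofAdd ((1 : ZMod n), (0 : ZMod n))).toAdd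
          = ((1 : ZMod n), (0 : ZMod n)) from rfl]
        rw [show ((a, c) + ((1 : ZMod n), (0 : ZMod n))) = (a + 1, c) by ext <;> simp]
        by_cases hc : c = 0
        · subst hc
          by_cases ha : a + 1 = 0
          · have hv : a.val + 1 = n := by
              rcases Nat.lt_or_ge (a.val + 1) n with h3 | h3
              · exfalso
                have h4 : ((a.val + 1 : ℕ) : ZMod n) = a + 1 := by
                  push_cast [ZMod.natCast_val, ZMod.cast_id]; ring
                have h5 : (a + 1).val = a.val + 1 := by
                  rw [← h4, ZMod.val_cast_of_lt h3]
                rw [ha, ZMod.val_zero] at h5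
                omega
              · exact le_antisymm (Nat.succ_le_of_lt (ZMod.val_lt a)) h3
            have : rep n (a, (0 : ZMod n)) * FreeGroup.of true * (rep n (a + 1, 0))⁻¹
                = xx ^ n := by
              rw [ha, rep, rep]
              simp only [ZMod.val_zero, pow_zero, mul_one, one_mul]
              rw [inv_one, mul_one, show FreeGroup.of true = xx from rfl, ← pow_succ, hv]
            rw [this]
            exact Subgroup.subset_closure ⟨Sum.inr (), rfl⟩
          · have hval : (a + 1).val = a.val + 1 := val_add_one_of_ne n ha
            have : rep n (a, (0 : ZMod n)) * FreeGroup.of true * (rep n (a + 1, 0))⁻¹ = 1 := by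
              rw [rep, rep, hval, pow_succ]
              show xx ^ a.val * yy ^ (0 : ZMod n).val * xx *
                (xx ^ a.val * xx * yy ^ (0 : ZMod n).val)⁻¹ = 1
              rw [ZMod.val_zero]
              group
            rw [this]
            exact one_mem H
        · exact Subgroup.subset_closure ⟨Sum.inl (a, c), by simp [gens, hc, genX, xx]⟩
    | inv_of b hb =>
      intro q
      set t := (piH n (FreeGroup.of b)).toAdd with ht
      have e : (piH n (FreeGroup.of b)⁻¹).toAdd = -t := by rw [map_inv]; rfl
      rw [e]
      have h2 := hb (q - t)
      rw [sub_add_cancel] at h2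
      have h3 := inv_mem h2
      have eq2 : (rep n (q - t) * FreeGroup.of b * (rep n q)⁻¹)⁻¹
          = rep n q * (FreeGroup.of b)⁻¹ * (rep n (q - t))⁻¹ := by group
      rw [eq2] at h3
      rwa [← sub_eq_add_neg]
    | mul u v hu hv =>
      intro q
      have e : (piH n (u * v)).toAdd = (piH n u).toAdd + (piH n v).toAdd := by
        rw [map_mul]; rfl
      rw [e, ← add_assoc]
      have h1 := hu q
      have h2 := hv (q + (piH n u).toAdd)
      have eq3 : rep n q * (u * v) * (rep n (q + (piH n u).toAdd + (piH n v).toAdd))⁻¹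
          = (rep n q * u * (rep n (q + (piH n u).toAdd))⁻¹) *
            (rep n (q + (piH n u).toAdd) * v *
              (rep n (q + (piH n u).toAdd + (piH n v).toAdd))⁻¹) := by group
      rw [eq3]
      exact mul_mem h1 h2
  have h0 := key 0
  rw [hw] at h0
  rw [show ((1 : Qm n)).toAdd = 0 from rfl, add_zero] at h0
  have hrep0 : rep n (0 : Qn n) = 1 := by simp [rep]
  rw [hrep0] at h0
  simpa using h0

end MUBN

namespace MUBN
variable (n : ℕ)

abbrev An := Qn n → Qn n
abbrev Am := Multiplicative (An n)

def trAut (q : Qn n) : Am n ≃* Am n where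
  toFun f := Multiplicative.ofAdd (fun p => f.toAdd (p - q))
  invFun f := Multiplicative.ofAdd (fun p => f.toAdd (p + q))
  left_inv f := by
    show Multiplicative.ofAdd (fun p => f.toAdd (p + q - q)) = f
    simp
  right_inv f := by
    show Multiplicative.ofAdd (fun p => f.toAdd (p - q + q)) = f
    simp
  map_mul' f g := rfl

def phiW : Qm n →* MulAut (Am n) :=
  MonoidHom.mk' (fun q => trAut n q.toAdd) (by
    intro q q'
    refine MulEquiv.ext (fun f => ?_)
    show Multiplicative.ofAdd (fun p => f.toAdd (p - (q.toAdd + q'.toAdd))) = _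
    show _ = Multiplicative.ofAdd (fun p => f.toAdd (p - q.toAdd - q'.toAdd))
    congr 1
    funext p
    rw [sub_sub])

abbrev Wn := SemidirectProduct (Am n) (Qm n) (phiW n)

def sing (v : Qn n) : An n := fun p => if p = 0 then v else 0

def psiW : F2 →* Wn n := FreeGroup.lift (fun b =>
  ⟨Multiplicative.ofAdd (sing n (if b then ((1 : ZMod n), (0 : ZMod n)) else (0, 1))),
   Multiplicative.ofAdd (if b then ((1 : ZMod n), (0 : ZMod n)) else (0, 1))⟩)

lemma psiW_xx : psiW n xx =
    ⟨Multiplicative.ofAdd (sing n ((1 : ZMod n), (0 : ZMod n))),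
     Multiplicative.ofAdd ((1 : ZMod n), (0 : ZMod n))⟩ := by
  simp [psiW, xx]

lemma psiW_yy : psiW n yy =
    ⟨Multiplicative.ofAdd (sing n ((0 : ZMod n), (1 : ZMod n))),
     Multiplicative.ofAdd ((0 : ZMod n), (1 : ZMod n))⟩ := by
  simp [psiW, yy]

lemma psiW_right_comp : SemidirectProduct.rightHom.comp (psiW n) = piH n := by
  apply FreeGroup.ext_hom
  intro b
  cases b
  · rw [MonoidHom.comp_apply]
    rw [show (FreeGroup.of false) = yy from rfl, psiW_yy, piH_yy]
    rfl
  · rw [MonoidHom.comp_apply]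
    rw [show (FreeGroup.of true) = xx from rfl, psiW_xx, piH_xx]
    rfl

lemma psiW_right (w : F2) : (psiW n w).right = piH n w := by
  have := DFunLike.congr_fun (psiW_right_comp n) w
  simpa using this

def LL (w : F2) : An n := ((psiW n w).left).toAdd

lemma LL_mul (u v : F2) (p : Qn n) :
    LL n (u * v) p = LL n u p + LL n v (p - (piH n u).toAdd) := by
  have h1 : psiW n (u * v) = psiW n u * psiW n v := map_mul _ _ _
  show ((psiW n (u * v)).left).toAdd p = _
  rw [h1, SemidirectProduct.mul_left]
  show (psiW n u).left.toAdd p + ((phiW n (psiW n u).right) (psiW n v).left).toAdd p = _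
  rw [psiW_right]
  rfl

lemma LL_inv (u : F2) (p : Qn n) :
    LL n u⁻¹ p = -LL n u (p + (piH n u).toAdd) := by
  have h1 : psiW n u⁻¹ = (psiW n u)⁻¹ := map_inv _ _
  show ((psiW n u⁻¹).left).toAdd p = _
  rw [h1, SemidirectProduct.inv_left]
  show ((phiW n (psiW n u).right⁻¹) (psiW n u).left⁻¹).toAdd p = _
  rw [psiW_right]
  show -((psiW n u).left).toAdd (p - (-(piH n u).toAdd)) = _
  rw [sub_neg_eq_add]
  rfl

lemma LL_one (p : Qn n) : LL n 1 p = 0 := by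
  show ((psiW n 1).left).toAdd p = 0
  rw [map_one]
  rfl

lemma LL_xx (p : Qn n) : LL n xx p = sing n ((1 : ZMod n), (0 : ZMod n)) p := by
  show ((psiW n xx).left).toAdd p = _
  rw [psiW_xx]
  rfl

lemma LL_yy (p : Qn n) : LL n yy p = sing n ((0 : ZMod n), (1 : ZMod n)) p := by
  show ((psiW n yy).left).toAdd p = _
  rw [psiW_yy]
  rfl

lemma LL_xx_pow [NeZero n] (m : ℕ) (hm : m ≤ n) (p : Qn n) :
    LL n (xx ^ m) p = if p.2 = 0 ∧ p.1.val < m then ((1 : ZMod n), (0 : ZMod n)) else 0 := by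
  induction m with
  | zero => simp [LL_one]
  | succ m ih =>
    have hm' : m ≤ n := Nat.le_of_succ_le hm
    rw [pow_succ, LL_mul, ih hm', piH_xx_pow, LL_xx]
    show _ + sing n _ (p - ((m : ZMod n), (0 : ZMod n))) = _
    rw [sing]
    have heq : (p - ((m : ZMod n), (0 : ZMod n)) = 0) ↔ (p.2 = 0 ∧ p.1.val = m) := by
      rw [sub_eq_zero]
      constructor
      · rintro rfl
        exact ⟨rfl, ZMod.val_cast_of_lt (lt_of_lt_of_le (Nat.lt_succ_self m) hm)⟩
      · rintro ⟨h2, h1⟩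
        have : p.1 = (m : ZMod n) := by rw [← h1, ZMod.natCast_val, ZMod.cast_id]
        exact Prod.ext this h2
    simp only [heq]
    by_cases hA : p.2 = 0
    · simp only [hA, true_and]
      split_ifs <;> first | (simp; done) | (exfalso; omega)
    · simp only [hA, false_and, if_false, add_zero]

lemma LL_yy_pow [NeZero n] (m : ℕ) (hm : m ≤ n) (p : Qn n) :
    LL n (yy ^ m) p = if p.1 = 0 ∧ p.2.val < m then ((0 : ZMod n), (1 : ZMod n)) else 0 := by
  induction m with
  | zero => simp [LL_one]
  | succ m ih =>
    have hm' : m ≤ n := Nat.le_of_succ_le hm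
    rw [pow_succ, LL_mul, ih hm', piH_yy_pow, LL_yy]
    show _ + sing n _ (p - ((0 : ZMod n), (m : ZMod n))) = _
    rw [sing]
    have heq : (p - ((0 : ZMod n), (m : ZMod n)) = 0) ↔ (p.1 = 0 ∧ p.2.val = m) := by
      rw [sub_eq_zero]
      constructor
      · rintro rfl
        exact ⟨rfl, ZMod.val_cast_of_lt (lt_of_lt_of_le (Nat.lt_succ_self m) hm)⟩
      · rintro ⟨h1, h2⟩
        have : p.2 = (m : ZMod n) := by rw [← h2, ZMod.natCast_val, ZMod.cast_id]
        exact Prod.ext h1 this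
    simp only [heq]
    by_cases hA : p.1 = 0
    · simp only [hA, true_and]
      split_ifs <;> first | (simp; done) | (exfalso; omega)
    · simp only [hA, false_and, if_false, add_zero]

lemma LL_rep [NeZero n] (t : Qn n) (p : Qn n) :
    LL n (rep n t) p =
      ((if p.2 = 0 ∧ p.1.val < t.1.val then 1 else 0),
       (if p.1 = t.1 ∧ p.2.val < t.2.val then 1 else 0)) := by
  rw [rep, LL_mul, piH_xx_pow,
    LL_xx_pow n _ (le_of_lt (ZMod.val_lt t.1)) p,
    LL_yy_pow n _ (le_of_lt (ZMod.val_lt t.2)) _]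
  have e1 : ((t.1.val : ZMod n)) = t.1 := by rw [ZMod.natCast_val, ZMod.cast_id]
  have e2 : (p - (((t.1.val : ℕ) : ZMod n), (0 : ZMod n))) = (p.1 - t.1, p.2) := by
    rw [e1]
    exact Prod.ext rfl (sub_zero p.2)
  rw [show (Multiplicative.ofAdd (((t.1.val : ℕ) : ZMod n), (0:ZMod n))).toAdd
    = (((t.1.val : ℕ) : ZMod n), (0:ZMod n)) from rfl, e2]
  have e3 : (p.1 - t.1 = 0) ↔ p.1 = t.1 := sub_eq_zero
  simp only [e3]
  have : ((p.1 - t.1, p.2) : Qn n).2 = p.2 := rfl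
  by_cases hA : p.2 = 0 <;> by_cases hB : p.1.val < t.1.val <;>
    by_cases hC : p.1 = t.1 <;> by_cases hD : p.2.val < t.2.val <;>
    simp [hA, hB, hC, hD, Prod.ext_iff, ZMod.val_zero] <;> split_ifs <;> simp
end MUBN

namespace MUBN
variable (n : ℕ)

lemma prod_add_eq (a b : ZMod n) :
    ((a, b) + ((1 : ZMod n), (0 : ZMod n))) = (a + 1, b) := by
  ext <;> simp

lemma LL_genX [NeZero n] (a b : ZMod n) (p : Qn n) :
    LL n (genX n a b) p = LL n (rep n (a, b)) p
      + sing n ((1 : ZMod n), (0 : ZMod n)) (p - (a, b)) - LL n (rep n (a + 1, b)) p := by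
  rw [genX, LL_mul, LL_mul, LL_inv, piH_rep, piH_rep]
  rw [map_mul, piH_rep, piH_xx, ← ofAdd_add, prod_add_eq]
  show LL n (rep n (a, b)) p + LL n xx (p - (a, b))
      + -LL n (rep n (a + 1, b)) (p - (a + 1, b) + (a + 1, b)) = _
  rw [sub_add_cancel, LL_xx]
  abel

lemma prod_add_eq' (a b : ZMod n) :
    ((a, b) + ((0 : ZMod n), (1 : ZMod n))) = (a, b + 1) := by
  ext <;> simp

lemma LL_genY [NeZero n] (a : ZMod n) (p : Qn n) :
    LL n (genY n a) p = LL n (rep n (a, -1)) p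
      + sing n ((0 : ZMod n), (1 : ZMod n)) (p - (a, -1)) - LL n (rep n (a, 0)) p := by
  rw [genY, LL_mul, LL_mul, LL_inv, piH_rep, piH_rep]
  rw [map_mul, piH_rep, piH_yy, ← ofAdd_add, prod_add_eq']
  show LL n (rep n (a, -1)) p + LL n yy (p - (a, -1))
      + -LL n (rep n (a, 0)) (p - (a, -1 + 1) + (a, 0)) = _
  rw [neg_add_cancel, show (p - (a, (0 : ZMod n)) + (a, 0)) = p from sub_add_cancel p _, LL_yy]
  abel

lemma LL_xn [NeZero n] (p : Qn n) :
    LL n (xx ^ n) p = if p.2 = 0 then ((1 : ZMod n), (0 : ZMod n)) else 0 := by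
  rw [LL_xx_pow n n le_rfl]
  by_cases h : p.2 = 0 <;> simp [h, ZMod.val_lt]

def coF (pt : Qn n) : An n →+ ZMod n :=
  (AddMonoidHom.fst (ZMod n) (ZMod n)).comp (Pi.evalAddMonoidHom (fun _ => Qn n) pt)
def coS (pt : Qn n) : An n →+ ZMod n :=
  (AddMonoidHom.snd (ZMod n) (ZMod n)).comp (Pi.evalAddMonoidHom (fun _ => Qn n) pt)

@[simp] lemma coF_apply (pt : Qn n) (f : An n) : coF n pt f = (f pt).1 := rfl
@[simp] lemma coS_apply (pt : Qn n) (f : An n) : coS n pt f = (f pt).2 := rfl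

def co : Qn n ⊕ Unit → (An n →+ ZMod n)
  | .inl q => if q.2 = 0 then coS n (q.1, -1) else coF n q
  | .inr _ => coF n (-1, 0)

lemma val_neg_one' [NeZero n] : (-1 : ZMod n).val = n - 1 := by
  obtain ⟨m, rfl⟩ : ∃ m, n = m + 1 :=
    ⟨n - 1, (Nat.succ_pred_eq_of_pos (Nat.pos_of_ne_zero (NeZero.ne n))).symm⟩
  rw [ZMod.val_neg_one]
  omega

lemma not_lt_val_neg_one [NeZero n] (c : ZMod n) : ¬((-1 : ZMod n).val < c.val) := by
  rw [val_neg_one']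
  have := ZMod.val_lt c
  omega

lemma not_val_lt_zero (c : ZMod n) : ¬(c.val < (0 : ZMod n).val) := by
  simp [ZMod.val_zero]

lemma co_gens [NeZero n] (k k' : Qn n ⊕ Unit) :
    co n k (LL n (gens n k')) = if k = k' then 1 else 0 := by
  have hv0 := fun c => not_val_lt_zero n c
  have hvn := fun c => not_lt_val_neg_one n c
  rcases k with ⟨a', b'⟩ | ⟨⟩ <;> rcases k' with ⟨a, b⟩ | ⟨⟩
  · show (co n (Sum.inl (a', b'))) (LL n (if b = 0 then genY n a else genX n a b)) = _
    rw [co]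
    by_cases hb : b = 0 <;> by_cases hb' : b' = 0 <;>
        simp only [hb, hb', if_pos, if_neg, ite_true, ite_false]
    · subst hb hb'
      simp only [coS_apply, LL_genY, Prod.snd_sub, Prod.snd_add, LL_rep, sing,
        Prod.mk_sub_mk, Prod.mk.injEq, sub_eq_zero, Sum.inl.injEq, ZMod.val_zero,
        apply_ite Prod.snd, hvn, hv0]
      split_ifs <;> simp_all [sub_eq_zero]
    · subst hb
      simp only [coF_apply, LL_genY, Prod.fst_sub, Prod.fst_add, LL_rep, sing,
        Prod.mk_sub_mk, Prod.mk.injEq, sub_eq_zero, Sum.inl.injEq, ZMod.val_zero,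
        apply_ite Prod.fst, hvn, hv0]
      split_ifs <;> simp_all [sub_eq_zero]
    · subst hb'
      simp only [coS_apply, LL_genX, Prod.snd_sub, Prod.snd_add, LL_rep, sing,
        Prod.mk_sub_mk, Prod.mk.injEq, sub_eq_zero, Sum.inl.injEq, ZMod.val_zero,
        apply_ite Prod.snd, hvn, hv0]
      split_ifs <;> simp_all [sub_eq_zero]
    · simp only [coF_apply, LL_genX, Prod.fst_sub, Prod.fst_add, LL_rep, sing,
        Prod.mk_sub_mk, Prod.mk.injEq, sub_eq_zero, Sum.inl.injEq, ZMod.val_zero,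
        apply_ite Prod.fst, hvn, hv0]
      split_ifs <;> simp_all [sub_eq_zero]
  · show (co n (Sum.inl (a', b'))) (LL n (xx ^ n)) = _
    rw [co]
    by_cases hb' : b' = 0
    · subst hb'
      rw [if_pos rfl, coS_apply, LL_xn]
      split_ifs <;> simp_all
    · rw [if_neg hb', coF_apply, LL_xn, if_neg hb']
      simp
  · show (coF n (-1, 0)) (LL n (if b = 0 then genY n a else genX n a b)) = _
    by_cases hb : b = 0 <;> simp only [hb, ite_true, ite_false]
    · simp only [coF_apply, LL_genY, Prod.fst_sub, Prod.fst_add, LL_rep, sing,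
        Prod.mk_sub_mk, Prod.mk.injEq, sub_eq_zero, ZMod.val_zero,
        apply_ite Prod.fst, hvn, hv0]
      split_ifs <;> simp_all [sub_eq_zero]
    · simp only [coF_apply, LL_genX, Prod.fst_sub, Prod.fst_add, LL_rep, sing,
        Prod.mk_sub_mk, Prod.mk.injEq, sub_eq_zero, ZMod.val_zero,
        apply_ite Prod.fst, hvn, hv0]
      split_ifs <;> simp_all [sub_eq_zero]
  · show (coF n (-1, 0)) (LL n (xx ^ n)) = _
    rw [coF_apply, LL_xn, if_pos rfl]
    simp

end MUBN

namespace MUBN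
variable (n : ℕ)

lemma eq_inl_of_right_one (x : Wn n) (h : x.right = 1) :
    x = SemidirectProduct.inl x.left := by
  have := (SemidirectProduct.inl_left_mul_inr_right x).symm
  rw [h, map_one, mul_one] at this
  exact this

lemma Am_pow_n (f : Am n) : f ^ n = 1 := by
  rw [← ofAdd_toAdd f, ← ofAdd_nsmul]
  have : n • f.toAdd = 0 := by
    funext p
    show n • (f.toAdd p) = 0
    ext <;> simp [nsmul_eq_mul, ZMod.natCast_self]
  rw [this, ofAdd_zero]

lemma S_le_psiW_ker (hn : 0 < n) :
    pwOf (pw n ⊔ commutator F2) n ⊔ ⁅pw n ⊔ commutator F2, pw n ⊔ commutator F2⁆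
      ≤ (psiW n).ker := by
  haveI : NeZero n := ⟨hn.ne'⟩
  have hRinl : ∀ r ∈ pw n ⊔ commutator F2,
      psiW n r = SemidirectProduct.inl ((psiW n r).left) := by
    intro r hr
    apply eq_inl_of_right_one
    rw [psiW_right]
    rw [R_eq_ker n hn] at hr
    exact hr
  apply sup_le
  · rw [pwOf, Subgroup.closure_le]
    rintro g ⟨h, hh, rfl⟩
    have : psiW n (h ^ n) = 1 := by
      rw [map_pow, hRinl h hh, ← map_pow, Am_pow_n, map_one]
    simpa [MonoidHom.mem_ker] using this
  · rw [Subgroup.commutator_le]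
    intro g hg h hh
    have : psiW n ⁅g, h⁆ = 1 := by
      rw [map_commutatorElement, hRinl g hg, hRinl h hh, ← map_commutatorElement,
        commutatorElement_eq_one_iff_mul_comm.mpr (mul_comm _ _), map_one]
    simpa [MonoidHom.mem_ker] using this

lemma LL_mul_of_ker (u v : F2) (hu : piH n u = 1) (p : Qn n) :
    LL n (u * v) p = LL n u p + LL n v p := by
  rw [LL_mul, hu]
  rw [show ((1 : Qm n)).toAdd = 0 from rfl, sub_zero]

lemma co_LL_pow (k₀ : Qn n ⊕ Unit) (u : F2) (h : piH n u = 1) (m : ℕ) :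
    co n k₀ (LL n (u ^ m)) = m • co n k₀ (LL n u) := by
  induction m with
  | zero =>
    have : LL n (u ^ 0) = 0 := by
      funext p
      exact LL_one n p
    rw [this, map_zero, zero_smul]
  | succ m ih =>
    have hm : piH n (u ^ m) = 1 := by rw [map_pow, h, one_pow]
    have : LL n (u ^ (m + 1)) = LL n (u ^ m) + LL n u := by
      funext p
      rw [pow_succ, LL_mul_of_ker n _ _ hm]
      rfl
    rw [this, map_add, ih, succ_nsmul]

lemma co_LL_list (k₀ : Qn n ⊕ Unit) (l : List F2) (h : ∀ w ∈ l, piH n w = 1) :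
    co n k₀ (LL n l.prod) = (l.map (fun w => co n k₀ (LL n w))).sum := by
  induction l with
  | nil =>
    have : LL n (List.prod []) = 0 := by
      funext p
      exact LL_one n p
    rw [this, map_zero]
    rfl
  | cons w l ih =>
    have hw : piH n w = 1 := h w List.mem_cons_self
    have : LL n (w * l.prod) = LL n w + LL n l.prod := by
      funext p
      rw [LL_mul_of_ker n _ _ hw]
      rfl
    rw [List.prod_cons, this, map_add, List.map_cons, List.sum_cons,
      ih (fun x hx => h x (List.mem_cons_of_mem w hx))]

noncomputable def Pc [NeZero n] (c : (Qn n ⊕ Unit) → ZMod n) : F2 :=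
  ((Finset.univ : Finset (Qn n ⊕ Unit)).toList.map (fun k => gens n k ^ (c k).val)).prod

lemma piH_gens_pow [NeZero n] (k : Qn n ⊕ Unit) (m : ℕ) : piH n (gens n k ^ m) = 1 := by
  have := gens_mem_ker n k
  rw [MonoidHom.mem_ker] at this
  rw [map_pow, this, one_pow]

lemma piH_Pc [NeZero n] (c : (Qn n ⊕ Unit) → ZMod n) : piH n (Pc n c) = 1 := by
  rw [Pc, map_list_prod, List.map_map]
  apply List.prod_eq_one
  intro x hx
  simp only [List.mem_map] at hx
  obtain ⟨k, -, rfl⟩ := hx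
  exact piH_gens_pow n k _

lemma co_Pc [NeZero n] (c : (Qn n ⊕ Unit) → ZMod n) (k₀ : Qn n ⊕ Unit) :
    co n k₀ (LL n (Pc n c)) = c k₀ := by
  rw [Pc, co_LL_list n k₀ _ (by
    intro w hw
    simp only [List.mem_map] at hw
    obtain ⟨k, -, rfl⟩ := hw
    exact piH_gens_pow n k _), List.map_map]
  have : ((fun w => co n k₀ (LL n w)) ∘ fun k => gens n k ^ (c k).val)
      = fun k => (c k).val • co n k₀ (LL n (gens n k)) := by
    funext k
    exact co_LL_pow n k₀ (gens n k) (MonoidHom.mem_ker.mp (gens_mem_ker n k)) (c k).val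
  rw [this]
  have : (fun k => (c k).val • co n k₀ (LL n (gens n k)))
      = fun k => if k₀ = k then ((c k).val : ZMod n) else 0 := by
    funext k
    rw [co_gens n k₀ k, nsmul_eq_mul, mul_ite, mul_one, mul_zero]
  rw [this, Finset.sum_map_toList, Finset.sum_ite_eq]
  simp [ZMod.natCast_val, ZMod.cast_id]

end MUBN

namespace MUBN
variable (n : ℕ)

instance pwOf_normal (H : Subgroup F2) [hN : H.Normal] (m : ℕ) : (pwOf H m).Normal := by
  constructor
  intro x hx g
  refine Subgroup.closure_induction (fun y hy => ?_) (by simpa using one_mem _)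
    (fun a b _ _ ha hb => ?_) (fun a _ ha => ?_) hx
  · obtain ⟨h, hh, rfl⟩ := hy
    exact Subgroup.subset_closure ⟨g * h * g⁻¹, hN.conj_mem h hh g, conj_pow⟩
  · have : g * (a * b) * g⁻¹ = (g * a * g⁻¹) * (g * b * g⁻¹) := by group
    rw [this]; exact mul_mem ha hb
  · have : g * a⁻¹ * g⁻¹ = (g * a * g⁻¹)⁻¹ := by group
    rw [this]; exact inv_mem ha

lemma gens_mem_R (hn : 0 < n) (k : Qn n ⊕ Unit) : gens n k ∈ pw n ⊔ commutator F2 := by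
  haveI : NeZero n := ⟨hn.ne'⟩
  rw [R_eq_ker n hn]
  exact gens_mem_ker n k

lemma Pc_mem_R (hn : 0 < n) [NeZero n] (c : (Qn n ⊕ Unit) → ZMod n) :
    Pc n c ∈ pw n ⊔ commutator F2 := by
  rw [R_eq_ker n hn, MonoidHom.mem_ker]
  exact piH_Pc n c

/-- The key injection for the lower bound. -/
lemma theta_inj (hn : 0 < n) [NeZero n] :
    Function.Injective (fun qc : Qn n × ((Qn n ⊕ Unit) → ZMod n) =>
      (QuotientGroup.mk (rep n qc.1 * Pc n qc.2) :
        F2 ⧸ (pwOf (pw n ⊔ commutator F2) n ⊔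
          ⁅pw n ⊔ commutator F2, pw n ⊔ commutator F2⁆))) := by
  set S := pwOf (pw n ⊔ commutator F2) n ⊔
    ⁅pw n ⊔ commutator F2, pw n ⊔ commutator F2⁆ with hS
  rintro ⟨q, c⟩ ⟨q', c'⟩ h
  simp only at h
  rw [QuotientGroup.eq] at h
  have h2 : psiW n (rep n q * Pc n c) = psiW n (rep n q' * Pc n c') := by
    have := S_le_psiW_ker n hn h
    rw [MonoidHom.mem_ker, map_mul, map_inv] at this
    exact (inv_mul_eq_one.mp this)
  have hpiPc : ∀ c₀ : (Qn n ⊕ Unit) → ZMod n, piH n (Pc n c₀) = 1 := piH_Pc n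
  have hq : q = q' := by
    have h3 : piH n (rep n q * Pc n c) = piH n (rep n q' * Pc n c') := by
      rw [← psiW_right, ← psiW_right, h2]
    rw [map_mul, map_mul, piH_rep, piH_rep, hpiPc, hpiPc, mul_one, mul_one] at h3
    exact Multiplicative.ofAdd.injective h3
  subst hq
  rw [map_mul, map_mul] at h2
  have h4 : psiW n (Pc n c) = psiW n (Pc n c') := mul_left_cancel h2
  have h5 : LL n (Pc n c) = LL n (Pc n c') := by
    rw [LL, LL, h4]
  have h6 : c = c' := by
    funext k₀
    rw [← co_Pc n c k₀, ← co_Pc n c' k₀, h5]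
  rw [h6]

/-- Cardinality of the quotient by `S`. -/
lemma card_S (hn : 0 < n) :
    Nat.card (F2 ⧸ (pwOf (pw n ⊔ commutator F2) n ⊔
      ⁅pw n ⊔ commutator F2, pw n ⊔ commutator F2⁆)) = n ^ (3 + n ^ 2) := by
  haveI : NeZero n := ⟨hn.ne'⟩
  set R := pw n ⊔ commutator F2 with hRdef
  set S := pwOf R n ⊔ ⁅R, R⁆ with hSdef
  have hSR : S ≤ R := by
    apply sup_le
    · rw [pwOf, Subgroup.closure_le]
      rintro g ⟨h, hh, rfl⟩
      exact pow_mem hh n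
    · rw [Subgroup.commutator_le]
      intro g hg h hh
      exact mul_mem (mul_mem (mul_mem hg hh) (inv_mem hg)) (inv_mem hh)
  set Rbar : Subgroup (F2 ⧸ S) := R.map (QuotientGroup.mk' S) with hRbar
  -- exponent n on Rbar
  have hexp : ∀ x : Rbar, x ^ n = 1 := by
    rintro ⟨x, hx⟩
    obtain ⟨r, hr, rfl⟩ := hx
    have : ((QuotientGroup.mk' S) r) ^ n = 1 := by
      rw [← map_pow, QuotientGroup.mk'_apply, QuotientGroup.eq_one_iff]
      exact Subgroup.mem_sup_left (Subgroup.subset_closure ⟨r, hr, rfl⟩)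
    ext
    simpa using this
  -- commutativity of Rbar
  have hcomm : ∀ x y : Rbar, x * y = y * x := by
    rintro ⟨x, hx⟩ ⟨y, hy⟩
    obtain ⟨r, hr, rfl⟩ := hx
    obtain ⟨s, hs, rfl⟩ := hy
    have : ((QuotientGroup.mk' S) r) * ((QuotientGroup.mk' S) s)
        = ((QuotientGroup.mk' S) s) * ((QuotientGroup.mk' S) r) := by
      rw [← map_mul, ← map_mul, QuotientGroup.mk'_apply, QuotientGroup.mk'_apply,
        QuotientGroup.eq_iff_div_mem]
      have hd : (r * s) / (s * r) = ⁅r, s⁆ := by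
        simp [commutatorElement_def, div_eq_mul_inv, mul_inv_rev, mul_assoc]
      rw [hd]
      exact Subgroup.mem_sup_right (Subgroup.commutator_mem_commutator hr hs)
    ext
    simpa using this
  letI : CommGroup Rbar := { (inferInstance : Group Rbar) with mul_comm := hcomm }
  -- generators of Rbar
  have hgen : Subgroup.closure (Set.range (gens n)) = R := by
    rw [hRdef, R_eq_ker n hn]
    apply le_antisymm
    · rw [Subgroup.closure_le]
      rintro g ⟨k, rfl⟩
      exact gens_mem_ker n k
    · exact ker_le_closure n hn
  have hmemk : ∀ k, QuotientGroup.mk' S (gens n k) ∈ Rbar := by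
    intro k
    exact ⟨gens n k, gens_mem_R n hn k, rfl⟩
  set gbar : (Qn n ⊕ Unit) → Rbar := fun k => ⟨QuotientGroup.mk' S (gens n k), hmemk k⟩
    with hgbar
  have htop : Subgroup.closure (Set.range gbar) = (⊤ : Subgroup Rbar) := by
    apply Subgroup.map_injective Rbar.subtype_injective
    rw [MonoidHom.map_closure, ← MonoidHom.range_eq_map, Subgroup.range_subtype]
    have himg : Rbar.subtype '' (Set.range gbar)
        = (QuotientGroup.mk' S) '' (Set.range (gens n)) := by
      ext z
      constructor
      · rintro ⟨⟨w, hw⟩, ⟨k, hk⟩, rfl⟩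
        exact ⟨gens n k, ⟨k, rfl⟩, congrArg Subtype.val hk⟩
      · rintro ⟨w, ⟨k, rfl⟩, rfl⟩
        exact ⟨gbar k, ⟨k, rfl⟩, rfl⟩
    rw [himg, ← MonoidHom.map_closure, hgen]
  -- the surjection from (K → ZMod n)
  have hpowmod : ∀ (x : Rbar) (a b : ZMod n), x ^ ((a + b).val) = x ^ a.val * x ^ b.val := by
    intro x a b
    rw [ZMod.val_add, ← pow_eq_pow_mod _ (hexp x), pow_add]
  set φm : Multiplicative ((Qn n ⊕ Unit) → ZMod n) →* Rbar :=
    MonoidHom.mk' (fun c => ∏ k, (gbar k) ^ ((c.toAdd k).val)) (by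
      intro c c'
      rw [← Finset.prod_mul_distrib]
      apply Finset.prod_congr rfl
      intro k _
      exact hpowmod (gbar k) (c.toAdd k) (c'.toAdd k)) with hφm
  have hφsurj : Function.Surjective φm := by
    rw [← MonoidHom.range_eq_top]
    rw [eq_top_iff, ← htop, Subgroup.closure_le]
    rintro x ⟨k, rfl⟩
    refine ⟨Multiplicative.ofAdd (fun j => if j = k then 1 else 0), ?_⟩
    show (∏ j, (gbar j) ^ (((if j = k then (1 : ZMod n) else 0)).val) ) = gbar k
    rw [Finset.prod_eq_single k
      (fun j _ hj => by rw [if_neg hj, ZMod.val_zero, pow_zero])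
      (fun h => absurd (Finset.mem_univ k) h)]
    rw [if_pos rfl, ZMod.val_one_eq_one_mod, ← pow_eq_pow_mod _ (hexp (gbar k)), pow_one]
  haveI : Finite Rbar := Finite.of_surjective φm hφsurj
  have hcardRbar : Nat.card Rbar ≤ n ^ (n * n + 1) := by
    have := Nat.card_le_card_of_surjective φm hφsurj
    calc Nat.card Rbar ≤ Nat.card (Multiplicative ((Qn n ⊕ Unit) → ZMod n)) := this
      _ = n ^ (n * n + 1) := by
        rw [Nat.card_congr Multiplicative.toAdd, Nat.card_fun, Nat.card_zmod, Nat.card_sum,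
          Nat.card_prod, Nat.card_zmod, Nat.card_eq_fintype_card (α := Unit),
          Fintype.card_unit]
  -- quotient of F2/S by Rbar
  have hmulcard : Nat.card (F2 ⧸ S) = Nat.card ((F2 ⧸ S) ⧸ Rbar) * Nat.card Rbar :=
    Subgroup.card_eq_card_quotient_mul_card_subgroup Rbar
  have hquotquot : Nat.card ((F2 ⧸ S) ⧸ Rbar) = Nat.card (F2 ⧸ R) :=
    Nat.card_congr (QuotientGroup.quotientQuotientEquivQuotient S R hSR).toEquiv
  have hsurjpi : Function.Surjective (piH n) := by
    intro q
    exact ⟨rep n q.toAdd, by rw [piH_rep, ofAdd_toAdd]⟩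
  have hcardR : Nat.card (F2 ⧸ R) = n * n := by
    rw [hRdef, R_eq_ker n hn]
    rw [Nat.card_congr (QuotientGroup.quotientKerEquivOfSurjective _ hsurjpi).toEquiv]
    rw [Nat.card_congr Multiplicative.toAdd, Nat.card_prod, Nat.card_zmod]
  haveI : Finite ((F2 ⧸ S) ⧸ Rbar) := by
    have : Nat.card ((F2 ⧸ S) ⧸ Rbar) ≠ 0 := by
      rw [hquotquot, hcardR]
      positivity
    exact Nat.finite_of_card_ne_zero this
  haveI : Finite (F2 ⧸ S) := Finite.of_equiv _ (Subgroup.groupEquivQuotientProdSubgroup (s := Rbar)).symm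
  -- lower bound
  have hlow : n ^ (3 + n ^ 2) ≤ Nat.card (F2 ⧸ S) := by
    have hinj := theta_inj n hn
    have := Nat.card_le_card_of_injective _ hinj
    calc n ^ (3 + n ^ 2) = Nat.card (Qn n × ((Qn n ⊕ Unit) → ZMod n)) := by
          rw [Nat.card_prod, Nat.card_prod, Nat.card_zmod, Nat.card_fun, Nat.card_zmod,
            Nat.card_sum, Nat.card_prod, Nat.card_zmod, Nat.card_eq_fintype_card (α := Unit),
            Fintype.card_unit]
          ring
      _ ≤ Nat.card (F2 ⧸ S) := this
  -- combine
  have hup : Nat.card (F2 ⧸ S) ≤ n ^ (3 + n ^ 2) := by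
    rw [hmulcard, hquotquot, hcardR]
    calc n * n * Nat.card Rbar ≤ n * n * n ^ (n * n + 1) :=
          Nat.mul_le_mul_left _ hcardRbar
      _ = n ^ (3 + n ^ 2) := by ring
  exact le_antisymm hup hlow

end MUBN

/-- With `R = F₂ⁿF₂'` and `S = RⁿR'`, one has `S ≤ F₂ⁿF₂''` and
`|F₂/S| = n^{3+n²}`; consequently `|M(2,n)| = |F₂/(F₂ⁿF₂'')| ≤ n^{n²+3}`. -/
theorem metabelian_upper_bound_newman (n : ℕ) (hn : 0 < n) :
    pwOf (pw n ⊔ commutator F2) n ⊔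
        ⁅pw n ⊔ commutator F2, pw n ⊔ commutator F2⁆ ≤
      pw n ⊔ ⁅commutator F2, commutator F2⁆ ∧
    Nat.card (F2 ⧸ (pwOf (pw n ⊔ commutator F2) n ⊔
        ⁅pw n ⊔ commutator F2, pw n ⊔ commutator F2⁆)) = n ^ (3 + n ^ 2) ∧
    Nat.card (F2 ⧸ (pw n ⊔ ⁅commutator F2, commutator F2⁆)) ≤ n ^ (n ^ 2 + 3) := by
  haveI : NeZero n := ⟨hn.ne'⟩
  haveI hTn : (pw n ⊔ ⁅commutator F2, commutator F2⁆).Normal := Subgroup.sup_normal _ _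
  have hpart1 : pwOf (pw n ⊔ commutator F2) n ⊔
      ⁅pw n ⊔ commutator F2, pw n ⊔ commutator F2⁆ ≤
        pw n ⊔ ⁅commutator F2, commutator F2⁆ := by
    apply sup_le
    · refine le_trans ?_ le_sup_left
      rw [pwOf, pw, Subgroup.closure_le]
      rintro g ⟨h, -, rfl⟩
      exact Subgroup.subset_closure ⟨h, rfl⟩
    · set T := pw n ⊔ ⁅commutator F2, commutator F2⁆ with hT
      have hker : (QuotientGroup.mk' T).ker = T := QuotientGroup.ker_mk' T
      rw [← hker, ← Subgroup.map_eq_bot_iff _, Subgroup.map_commutator]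
      have h1 : Subgroup.map (QuotientGroup.mk' T) (pw n) = ⊥ :=
        (Subgroup.map_eq_bot_iff _).mpr (by rw [hker]; exact le_sup_left)
      have h2 : Subgroup.map (QuotientGroup.mk' T) (pw n ⊔ commutator F2)
          = Subgroup.map (QuotientGroup.mk' T) (commutator F2) := by
        rw [Subgroup.map_sup, h1, bot_sup_eq]
      rw [h2, ← Subgroup.map_commutator]
      exact (Subgroup.map_eq_bot_iff _).mpr (by rw [hker]; exact le_sup_right)
  have hpart2 := MUBN.card_S n hn
  refine ⟨hpart1, hpart2, ?_⟩
  haveI hfin : Finite (F2 ⧸ (pwOf (pw n ⊔ commutator F2) n ⊔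
      ⁅pw n ⊔ commutator F2, pw n ⊔ commutator F2⁆)) :=
    Nat.finite_of_card_ne_zero (by rw [hpart2]; positivity)
  set φ := QuotientGroup.map (pwOf (pw n ⊔ commutator F2) n ⊔
      ⁅pw n ⊔ commutator F2, pw n ⊔ commutator F2⁆)
    (pw n ⊔ ⁅commutator F2, commutator F2⁆) (MonoidHom.id F2)
    (by simpa using hpart1) with hφ
  have hφsurj : Function.Surjective φ := by
    intro x
    induction x using QuotientGroup.induction_on with | _ z =>
    exact ⟨QuotientGroup.mk z, by simp [hφ, QuotientGroup.map_mk]⟩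
  calc Nat.card (F2 ⧸ (pw n ⊔ ⁅commutator F2, commutator F2⁆))
      ≤ Nat.card (F2 ⧸ (pwOf (pw n ⊔ commutator F2) n ⊔
          ⁅pw n ⊔ commutator F2, pw n ⊔ commutator F2⁆)) :=
        Nat.card_le_card_of_surjective φ hφsurj
    _ = n ^ (n ^ 2 + 3) := by rw [hpart2, Nat.add_comm]
end

section
/- Let n ≥ 1. The area invariant A : F₂' → Z, A(z) = P_z(1,1) (evaluation of the winding invariant at X = Y = 1), induces an isomorphism from N(2,n)' to Z_{n/2} if n is even and to Z_n if n is odd, where N(2,n) = F₂/(γ₃(F₂) F₂ⁿ) is the free nilpotent group of class 2, rank 2 and exponent n. Consequently |N(2,n)| = n³/2 for n even and |N(2,n)| = n³ for n odd. -/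
open scoped commutatorElement



@[ext] structure Heis where
  a : ℤ
  b : ℤ
  c : ℤ

namespace Heis

instance : Mul Heis := ⟨fun p q => ⟨p.a + q.a, p.b + q.b, p.c + q.c + p.a * q.b⟩⟩
instance : One Heis := ⟨⟨0, 0, 0⟩⟩
instance : Inv Heis := ⟨fun p => ⟨-p.a, -p.b, -p.c + p.a * p.b⟩⟩

@[simp] lemma mul_a (p q : Heis) : (p * q).a = p.a + q.a := rfl
@[simp] lemma mul_b (p q : Heis) : (p * q).b = p.b + q.b := rfl
@[simp] lemma mul_c (p q : Heis) : (p * q).c = p.c + q.c + p.a * q.b := rfl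
@[simp] lemma one_a : (1 : Heis).a = 0 := rfl
@[simp] lemma one_b : (1 : Heis).b = 0 := rfl
@[simp] lemma one_c : (1 : Heis).c = 0 := rfl
@[simp] lemma inv_a (p : Heis) : p⁻¹.a = -p.a := rfl
@[simp] lemma inv_b (p : Heis) : p⁻¹.b = -p.b := rfl
@[simp] lemma inv_c (p : Heis) : p⁻¹.c = -p.c + p.a * p.b := rfl

instance : Group Heis where
  mul_assoc p q r := by ext <;> simp <;> ring
  one_mul p := by ext <;> simp
  mul_one p := by ext <;> simp
  inv_mul_cancel p := by ext <;> simp <;> ring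

lemma pow_def (p : Heis) (k : ℕ) :
    p ^ k = ⟨k * p.a, k * p.b, k * p.c + (k.choose 2 : ℤ) * (p.a * p.b)⟩ := by
  induction k with
  | zero => ext <;> simp
  | succ k ih =>
      rw [pow_succ, ih]
      have h2 : ((k+1).choose 2 : ℤ) = (k.choose 2 : ℤ) + k := by
        rw [Nat.choose_succ_succ]
        push_cast [Nat.choose_one_right]
        ring
      ext <;> simp [h2] <;> push_cast <;> ring

lemma zpow_def (p : Heis) (h : p.a = 0 ∨ p.b = 0) (m : ℤ) :
    p ^ m = ⟨m * p.a, m * p.b, m * p.c⟩ := by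
  have hab : p.a * p.b = 0 := by rcases h with h | h <;> simp [h]
  induction m using Int.induction_on with
  | zero => ext <;> simp
  | succ k ih =>
      rw [zpow_add_one, ih]
      ext <;> simp <;> ring_nf
      rcases h with h | h <;> simp [h] <;> ring
  | pred k ih =>
      rw [zpow_sub_one, ih]
      ext <;> simp <;> ring_nf
      rcases h with h | h <;> simp [h] <;> ring

lemma two_choose_two (k : ℕ) : 2 * k.choose 2 = k * (k - 1) := by
  induction k with
  | zero => simp
  | succ k ih =>
      rw [Nat.choose_succ_succ, Nat.choose_one_right, Nat.mul_add, ih]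
      cases k with
      | zero => simp
      | succ k => simp [Nat.succ_sub_one]; ring

end Heis


def psi : F2 →* Heis := FreeGroup.lift fun b => if b then ⟨1,0,0⟩ else ⟨0,1,0⟩

def tt2 : F2 := ⁅xx, yy⁆

@[simp] lemma psi_x : psi xx = ⟨1,0,0⟩ := by simp [psi, xx]
@[simp] lemma psi_y : psi yy = ⟨0,1,0⟩ := by simp [psi, yy]
@[simp] lemma psi_t : psi tt2 = ⟨0,0,1⟩ := by
  rw [tt2, map_commutatorElement, psi_x, psi_y, commutatorElement_def]
  ext <;> simp

lemma t_mem_comm : tt2 ∈ commutator F2 := by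
  rw [commutator_def]
  exact Subgroup.commutator_mem_commutator (Subgroup.mem_top _) (Subgroup.mem_top _)

/-- first coordinate hom -/
def hA1 : Heis →* Multiplicative ℤ where
  toFun p := Multiplicative.ofAdd p.a
  map_one' := rfl
  map_mul' p q := by simp [ofAdd_add]

def hA2 : Heis →* Multiplicative ℤ where
  toFun p := Multiplicative.ofAdd p.b
  map_one' := rfl
  map_mul' p q := by simp [ofAdd_add]

lemma psi_comm_a {z : F2} (hz : z ∈ commutator F2) : (psi z).a = 0 := by
  have := Abelianization.commutator_subset_ker (hA1.comp psi) hz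
  simpa [MonoidHom.mem_ker, hA1] using this

lemma psi_comm_b {z : F2} (hz : z ∈ commutator F2) : (psi z).b = 0 := by
  have := Abelianization.commutator_subset_ker (hA2.comp psi) hz
  simpa [MonoidHom.mem_ker, hA2] using this

section ClassTwo

variable {G : Type*} [Group G] (X Y T : G)
variable (hT : ∀ g : G, Commute T g) (hXY : T = X * Y * X⁻¹ * Y⁻¹)

include hT in
lemma cconj (g : G) (u : ℤ) : g * T ^ u * g⁻¹ = T ^ u := by
  rw [← ((hT g).zpow_left u).eq]; group

include hT in
lemma cconj' (g : G) (u : ℤ) : g⁻¹ * T ^ u * g = T ^ u := by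
  have := cconj T hT g⁻¹ u
  simpa using this

include hT in
lemma cconj2 (g : G) (u : ℤ) : T ^ u * g * T ^ (-u) = g := by
  rw [((hT g).zpow_left u).eq]; group

include hT hXY in
lemma conjY (b : ℤ) : X * Y ^ b * X⁻¹ = T ^ b * Y ^ b := by
  have h1 : X * Y * X⁻¹ = T * Y := by rw [hXY]; group
  rw [← conj_zpow, h1, (hT Y).mul_zpow]

include hT hXY in
lemma conjYinv (b : ℤ) : X⁻¹ * Y ^ b * X = T ^ (-b) * Y ^ b := by
  have h2 : X⁻¹ * Y * X = T⁻¹ * Y := by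
    have hc : X⁻¹ * T * X = T := by rw [← (hT X⁻¹).eq]; group
    calc X⁻¹ * Y * X = X⁻¹ * T⁻¹ * (X * Y * X⁻¹ * Y⁻¹) * Y * X := by rw [← hXY]; group
      _ = (X⁻¹ * T⁻¹ * X) * Y := by group
      _ = T⁻¹ * Y := by
          have := cconj T hT X⁻¹ (-1)
          simp only [zpow_neg_one] at this
          rw [show X⁻¹ * T⁻¹ * X = X⁻¹ * T⁻¹ * X⁻¹⁻¹ by group, this]
  have h3 : X⁻¹ * Y ^ b * X = (X⁻¹ * Y * X⁻¹⁻¹) ^ b := by rw [conj_zpow]; group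
  rw [h3, show X⁻¹ * Y * X⁻¹⁻¹ = X⁻¹ * Y * X by group, h2, ((hT Y).inv_left).mul_zpow]
  group

include hT hXY in
lemma conj2 (a b : ℤ) : X ^ a * Y ^ b * X ^ (-a) = T ^ (a * b) * Y ^ b := by
  induction a using Int.induction_on with
  | zero => group
  | succ k ih =>
      calc X ^ ((k:ℤ)+1) * Y ^ b * X ^ (-((k:ℤ)+1))
          = X * (X ^ (k:ℤ) * Y ^ b * X ^ (-(k:ℤ))) * X⁻¹ := by group
        _ = X * (T ^ ((k:ℤ) * b) * Y ^ b) * X⁻¹ := by rw [ih]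
        _ = (X * T ^ ((k:ℤ) * b) * X⁻¹) * (X * Y ^ b * X⁻¹) := by group
        _ = T ^ ((k:ℤ) * b) * (T ^ b * Y ^ b) := by rw [cconj T hT, conjY X Y T hT hXY]
        _ = T ^ (((k:ℤ)+1) * b) * Y ^ b := by group
  | pred k ih =>
      calc X ^ (-(k:ℤ)-1) * Y ^ b * X ^ (-(-(k:ℤ)-1))
          = X⁻¹ * (X ^ (-(k:ℤ)) * Y ^ b * X ^ (-(-(k:ℤ)))) * X := by group
        _ = X⁻¹ * (T ^ (-(k:ℤ) * b) * Y ^ b) * X := by rw [ih]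
        _ = (X⁻¹ * T ^ (-(k:ℤ) * b) * X) * (X⁻¹ * Y ^ b * X) := by group
        _ = T ^ (-(k:ℤ) * b) * (T ^ (-b) * Y ^ b) := by
            rw [cconj' T hT, conjYinv X Y T hT hXY]
        _ = T ^ ((-(k:ℤ)-1) * b) * Y ^ b := by group

include hT hXY in
lemma yx_swap (a' b : ℤ) : Y ^ b * X ^ a' = X ^ a' * (T ^ (-(a' * b)) * Y ^ b) := by
  have h := conj2 X Y T hT hXY (-a') b
  calc Y ^ b * X ^ a' = X ^ a' * (X ^ (-a') * Y ^ b * X ^ (-(-a'))) := by group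
    _ = X ^ a' * (T ^ (-a' * b) * Y ^ b) := by rw [h]
    _ = X ^ a' * (T ^ (-(a' * b)) * Y ^ b) := by group

include hT hXY in
lemma NF_mul_gen (a b c a' b' c' : ℤ) :
    (X ^ a * Y ^ b * T ^ c) * (X ^ a' * Y ^ b' * T ^ c') =
      X ^ (a+a') * Y ^ (b+b') * T ^ (c+c'-a'*b) := by
  calc (X ^ a * Y ^ b * T ^ c) * (X ^ a' * Y ^ b' * T ^ c')
      = X ^ a * Y ^ b * (T ^ c * (X ^ a' * Y ^ b') * T ^ (-c)) * T ^ (c+c') := by group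
    _ = X ^ a * (Y ^ b * X ^ a') * Y ^ b' * T ^ (c+c') := by rw [cconj2 T hT]; group
    _ = X ^ a * (X ^ a' * (T ^ (-(a'*b)) * Y ^ b)) * Y ^ b' * T ^ (c+c') := by
        rw [yx_swap X Y T hT hXY]
    _ = X ^ (a+a') * (T ^ (-(a'*b)) * Y ^ (b+b') * T ^ (-(-(a'*b)))) * T ^ (c+c'-a'*b) := by
        group
    _ = X ^ (a+a') * Y ^ (b+b') * T ^ (c+c'-a'*b) := by rw [cconj2 T hT]

end ClassTwo

-- γ₃ and the quotient
abbrev G3 : Subgroup F2 := Subgroup.lowerCentralSeries (⊤ : Subgroup F2) 2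

lemma lcs2_eq : G3 = ⁅(commutator F2 : Subgroup F2), ⊤⁆ := by
  show Subgroup.lowerCentralSeries (⊤ : Subgroup F2) (1+1) = _
  rw [Subgroup.lowerCentralSeries_succ, Subgroup.top_lowerCentralSeries_one, Subgroup.commutator_def]

abbrev Q := F2 ⧸ G3
abbrev mkQ : F2 →* Q := QuotientGroup.mk' G3
abbrev XQ : Q := mkQ xx
abbrev YQ : Q := mkQ yy
abbrev TQ : Q := mkQ tt2

lemma T_central (q : Q) : Commute TQ q := by
  induction q using QuotientGroup.induction_on with
  | H g =>
    have h : ⁅tt2, g⁆ ∈ G3 := by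
      rw [lcs2_eq]
      exact Subgroup.commutator_mem_commutator t_mem_comm (Subgroup.mem_top _)
    have h2 : mkQ ⁅tt2, g⁆ = 1 := (QuotientGroup.eq_one_iff _).mpr h
    rw [map_commutatorElement] at h2
    exact commutatorElement_eq_one_iff_commute.mp h2

lemma TQ_eq : TQ = XQ * YQ * XQ⁻¹ * YQ⁻¹ := by
  show mkQ tt2 = _
  rw [tt2, map_commutatorElement, commutatorElement_def]

/-- The key normal form lemma: every `z` equals `x^a y^b t^(c-ab)` modulo `γ₃`,
where `(a,b,c) = ψ z`. -/
lemma key (z : F2) :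
    mkQ z = XQ ^ (psi z).a * YQ ^ (psi z).b * TQ ^ ((psi z).c - (psi z).a * (psi z).b) := by
  induction z using FreeGroup.induction_on with
  | C1 => simp [-Subgroup.lowerCentralSeries_succ]
  | of b =>
      cases b
      · show mkQ yy = XQ ^ (psi yy).a * YQ ^ (psi yy).b *
          TQ ^ ((psi yy).c - (psi yy).a * (psi yy).b)
        rw [psi_y]
        simp [-Subgroup.lowerCentralSeries_succ]
      · show mkQ xx = XQ ^ (psi xx).a * YQ ^ (psi xx).b *
          TQ ^ ((psi xx).c - (psi xx).a * (psi xx).b)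
        rw [psi_x]
        simp [-Subgroup.lowerCentralSeries_succ]
  | inv_of b hb =>
      cases b
      · show mkQ yy⁻¹ = XQ ^ (psi yy⁻¹).a * YQ ^ (psi yy⁻¹).b *
          TQ ^ ((psi yy⁻¹).c - (psi yy⁻¹).a * (psi yy⁻¹).b)
        simp only [map_inv, psi_y]
        simp [-Subgroup.lowerCentralSeries_succ]
      · show mkQ xx⁻¹ = XQ ^ (psi xx⁻¹).a * YQ ^ (psi xx⁻¹).b *
          TQ ^ ((psi xx⁻¹).c - (psi xx⁻¹).a * (psi xx⁻¹).b)
        simp only [map_inv, psi_x]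
        simp [-Subgroup.lowerCentralSeries_succ]
  | mul z w hz hw =>
      rw [map_mul, hz, hw, NF_mul_gen XQ YQ TQ T_central TQ_eq]
      rw [map_mul]
      have e1 : (psi z * psi w).a = (psi z).a + (psi w).a := rfl
      have e2 : (psi z * psi w).b = (psi z).b + (psi w).b := rfl
      have e3 : (psi z * psi w).c = (psi z).c + (psi w).c + (psi z).a * (psi w).b := rfl
      rw [e1, e2, e3]
      congr 1
      ring

lemma key_mem (z : F2) (a b c : ℤ) (h : psi z = ⟨a, b, c⟩) :
    z * (xx ^ a * yy ^ b * tt2 ^ (c - a * b))⁻¹ ∈ G3 := by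
  have hk := key z
  rw [h] at hk
  have h2 : mkQ (xx ^ a * yy ^ b * tt2 ^ (c - a * b)) =
      XQ ^ a * YQ ^ b * TQ ^ (c - a * b) := by
    simp only [map_mul, map_zpow]
  apply (QuotientGroup.eq_one_iff _).mp
  show mkQ (z * (xx ^ a * yy ^ b * tt2 ^ (c - a * b))⁻¹) = 1
  rw [map_mul, map_inv, h2, hk]
  group

lemma heis_central_comm (p q : Heis) (ha : p.a = 0) (hb : p.b = 0) : ⁅p, q⁆ = 1 := by
  rw [commutatorElement_def]
  ext <;> simp [ha, hb] <;> ring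

lemma psi_zpow_x (a : ℤ) : psi (xx ^ a) = ⟨a, 0, 0⟩ := by
  rw [map_zpow, psi_x, Heis.zpow_def _ (Or.inr rfl)]
  ext <;> simp

lemma psi_zpow_y (b : ℤ) : psi (yy ^ b) = ⟨0, b, 0⟩ := by
  rw [map_zpow, psi_y, Heis.zpow_def _ (Or.inl rfl)]
  ext <;> simp

lemma psi_zpow_t (c : ℤ) : psi (tt2 ^ c) = ⟨0, 0, c⟩ := by
  rw [map_zpow, psi_t, Heis.zpow_def _ (Or.inl rfl)]
  ext <;> simp

lemma psi_nf (a b c : ℤ) : psi (xx ^ a * yy ^ b * tt2 ^ (c - a * b)) = ⟨a, b, c⟩ := by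
  rw [map_mul, map_mul, psi_zpow_x, psi_zpow_y, psi_zpow_t]
  ext <;> simp <;> ring

lemma psi_surj : Function.Surjective psi := by
  intro p
  exact ⟨xx ^ p.a * yy ^ p.b * tt2 ^ (p.c - p.a * p.b), psi_nf p.a p.b p.c⟩

section Main

variable (n l : ℕ) (hln : (l : ℤ) ∣ (n : ℤ))

def MH : Subgroup Heis where
  carrier := {p | (n : ℤ) ∣ p.a ∧ (n : ℤ) ∣ p.b ∧ (l : ℤ) ∣ p.c}
  one_mem' := by simp
  mul_mem' := by
    rintro p q ⟨ha, hb, hc⟩ ⟨ha', hb', hc'⟩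
    refine ⟨by simpa using dvd_add ha ha', by simpa using dvd_add hb hb', ?_⟩
    have : (l : ℤ) ∣ p.a * q.b := Dvd.dvd.mul_right (hln.trans ha) q.b
    simpa using dvd_add (dvd_add hc hc') this
  inv_mem' := by
    rintro p ⟨ha, hb, hc⟩
    refine ⟨by simpa using ha, by simpa using hb, ?_⟩
    have : (l : ℤ) ∣ p.a * p.b := Dvd.dvd.mul_right (hln.trans ha) p.b
    simpa using dvd_add (dvd_neg.mpr hc) this

lemma MH_normal : (MH n l hln).Normal := by
  constructor
  intro p hp g
  obtain ⟨ha, hb, hc⟩ := hp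
  refine ⟨by simpa using ha, by simpa using hb, ?_⟩
  show (l : ℤ) ∣ (g * p * g⁻¹).c
  have h1 : (g * p * g⁻¹).c = p.c + g.a * p.b - p.a * g.b := by simp; ring
  rw [h1]
  have h2 : (l : ℤ) ∣ g.a * p.b := Dvd.dvd.mul_left (hln.trans hb) g.a
  have h3 : (l : ℤ) ∣ p.a * g.b := Dvd.dvd.mul_right (hln.trans ha) g.b
  exact dvd_sub (dvd_add hc h2) h3

variable (hn : 1 ≤ n) (hlc : (l : ℤ) ∣ (n.choose 2 : ℤ))
  (hbez : ∃ α β : ℤ, α * n + β * (n.choose 2 : ℤ) = l)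

-- the element w_n = x^n (x⁻¹ y)^n y^{-n}
def wn : F2 := xx ^ n * (xx⁻¹ * yy) ^ n * (yy⁻¹) ^ n

lemma wn_mem_pw : wn n ∈ pw n := by
  refine mul_mem (mul_mem ?_ ?_) ?_ <;>
    exact Subgroup.subset_closure ⟨_, rfl⟩

include hn in
lemma psi_wn : psi (wn n) = ⟨0, 0, (n.choose 2 : ℤ)⟩ := by
  have h2 : 2 * (n.choose 2 : ℤ) = n * (n - 1) := by
    have := Heis.two_choose_two n
    have hcast : ((2 * n.choose 2 : ℕ) : ℤ) = ((n * (n - 1) : ℕ) : ℤ) := by rw [this]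
    push_cast [Nat.cast_sub hn] at hcast
    push_cast
    linarith
  have e1 : psi (xx ^ n) = ⟨n, 0, 0⟩ := by
    rw [map_pow, psi_x, Heis.pow_def]; ext <;> simp
  have e2 : psi ((xx⁻¹ * yy) ^ n) = ⟨-n, n, -n - (n.choose 2 : ℤ)⟩ := by
    rw [map_pow, map_mul, map_inv, psi_x, psi_y]
    have : ((⟨1,0,0⟩ : Heis)⁻¹ * ⟨0,1,0⟩) = (⟨-1,1,-1⟩ : Heis) := by ext <;> simp
    rw [this, Heis.pow_def]
    ext <;> simp <;> ring
  have e3 : psi ((yy⁻¹) ^ n) = ⟨0, -n, 0⟩ := by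
    rw [map_pow, map_inv, psi_y]
    have : ((⟨0,1,0⟩ : Heis)⁻¹) = (⟨0,-1,0⟩ : Heis) := by ext <;> simp
    rw [this, Heis.pow_def]
    ext <;> simp
  rw [wn, map_mul, map_mul, e1, e2, e3]
  ext <;> simp
  linarith

include hn in
lemma te_mem : tt2 ^ (n.choose 2 : ℤ) ∈ G3 ⊔ pw n := by
  have hk := key_mem (wn n) 0 0 (n.choose 2 : ℤ) (by rw [psi_wn n hn])
  simp only [zpow_zero, one_mul, zero_mul, sub_zero] at hk
  have : tt2 ^ (n.choose 2 : ℤ) = (wn n * (tt2 ^ (n.choose 2 : ℤ))⁻¹)⁻¹ * wn n := by group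
  rw [this]
  exact mul_mem (inv_mem (Subgroup.mem_sup_left hk))
    (Subgroup.mem_sup_right (wn_mem_pw n))

lemma tpow_n_mem (α : ℤ) : tt2 ^ (α * n) ∈ pw n := by
  have : tt2 ^ (α * (n:ℤ)) = (tt2 ^ α) ^ (n : ℕ) := by
    rw [zpow_mul, zpow_natCast]
  rw [this]
  exact Subgroup.subset_closure ⟨_, rfl⟩

include hn hbez in
lemma tl_mem : tt2 ^ (l : ℤ) ∈ G3 ⊔ pw n := by
  obtain ⟨α, β, hab⟩ := hbez
  rw [← hab, zpow_add]
  refine mul_mem (Subgroup.mem_sup_right (tpow_n_mem n α)) ?_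
  rw [mul_comm β _, zpow_mul]
  exact zpow_mem (te_mem n hn) β

include hn hlc hbez in
theorem comap_eq : Subgroup.comap psi (MH n l hln) = G3 ⊔ pw n := by
  apply le_antisymm
  · intro z hz
    obtain ⟨ha, hb, hc⟩ := hz
    obtain ⟨a0, ha0⟩ := ha
    obtain ⟨b0, hb0⟩ := hb
    set a := (psi z).a
    set b := (psi z).b
    set c := (psi z).c
    have hz2 : z = (z * (xx ^ a * yy ^ b * tt2 ^ (c - a * b))⁻¹) *
        (xx ^ a * yy ^ b * tt2 ^ (c - a * b)) := by group
    rw [hz2]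
    refine mul_mem (Subgroup.mem_sup_left (key_mem z a b c rfl)) ?_
    refine mul_mem (mul_mem ?_ ?_) ?_
    · apply Subgroup.mem_sup_right
      have : xx ^ a = (xx ^ a0) ^ (n : ℕ) := by
        rw [← zpow_natCast, ← zpow_mul, ha0]; ring_nf
      rw [this]
      exact Subgroup.subset_closure ⟨_, rfl⟩
    · apply Subgroup.mem_sup_right
      have : yy ^ b = (yy ^ b0) ^ (n : ℕ) := by
        rw [← zpow_natCast, ← zpow_mul, hb0]; ring_nf
      rw [this]
      exact Subgroup.subset_closure ⟨_, rfl⟩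
    · have hcl : (l : ℤ) ∣ c - a * b := by
        refine dvd_sub hc ?_
        exact Dvd.dvd.mul_right (hln.trans ⟨a0, ha0⟩) b
      obtain ⟨k, hk⟩ := hcl
      rw [hk, zpow_mul]
      exact zpow_mem (tl_mem n l hn hbez) k
  · refine sup_le ?_ ?_
    · rw [lcs2_eq, Subgroup.commutator_le]
      intro g1 hg1 g2 _
      show psi ⁅g1, g2⁆ ∈ MH n l hln
      rw [map_commutatorElement,
        heis_central_comm _ _ (psi_comm_a hg1) (psi_comm_b hg1)]
      exact one_mem _
    · rw [pw, Subgroup.closure_le]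
      rintro g ⟨h, rfl⟩
      show psi (h ^ n) ∈ MH n l hln
      rw [map_pow, Heis.pow_def]
      refine ⟨⟨(psi h).a, by simp⟩, ⟨(psi h).b, by simp⟩, ?_⟩
      show (l:ℤ) ∣ n * (psi h).c + (n.choose 2 : ℤ) * ((psi h).a * (psi h).b)
      exact dvd_add (hln.trans (dvd_mul_right _ _)) (Dvd.dvd.mul_right hlc _)

end Main

section Count

variable (n l : ℕ) (hln : (l : ℤ) ∣ (n : ℤ))

def fab : Heis →* Multiplicative (ZMod n) × Multiplicative (ZMod n) where
  toFun p := (Multiplicative.ofAdd (p.a : ZMod n), Multiplicative.ofAdd (p.b : ZMod n))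
  map_one' := by
    show (Multiplicative.ofAdd (((0:ℤ) : ZMod n)), Multiplicative.ofAdd (((0:ℤ) : ZMod n))) = 1
    simp
  map_mul' p q := by
    show (Multiplicative.ofAdd ((((p.a + q.a :ℤ)) : ZMod n)),
      Multiplicative.ofAdd (((p.b + q.b :ℤ) : ZMod n))) = _
    push_cast
    simp [Prod.ext_iff, ofAdd_add]

lemma fab_surj : Function.Surjective (fab n) := by
  rintro ⟨u, v⟩
  obtain ⟨u0, hu⟩ := ZMod.intCast_surjective (n := n) (Multiplicative.toAdd u)
  obtain ⟨v0, hv⟩ := ZMod.intCast_surjective (n := n) (Multiplicative.toAdd v)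
  exact ⟨⟨u0, v0, 0⟩, by simp [fab, hu, hv]⟩

lemma mem_ker_fab (p : Heis) : p ∈ (fab n).ker ↔ ((n:ℤ) ∣ p.a ∧ (n:ℤ) ∣ p.b) := by
  rw [MonoidHom.mem_ker]
  show (Multiplicative.ofAdd ((p.a : ZMod n)), Multiplicative.ofAdd ((p.b : ZMod n))) = 1 ↔ _
  rw [Prod.ext_iff]
  simp [← ZMod.intCast_zmod_eq_zero_iff_dvd]

lemma MH_le_ker : MH n l hln ≤ (fab n).ker := by
  rintro p ⟨ha, hb, _⟩
  exact (mem_ker_fab n p).mpr ⟨ha, hb⟩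

def fc : (fab n).ker →* Multiplicative (ZMod l) where
  toFun m := Multiplicative.ofAdd (((m : Heis).c : ZMod l))
  map_one' := by
    show Multiplicative.ofAdd (((1 : Heis).c : ZMod l)) = 1
    simp
  map_mul' m m' := by
    have ha : (n:ℤ) ∣ (m : Heis).a := ((mem_ker_fab n _).mp m.2).1
    have : (l:ℤ) ∣ (m : Heis).a * (m' : Heis).b :=
      Dvd.dvd.mul_right (hln.trans ha) _
    show Multiplicative.ofAdd ((((m:Heis).c + (m':Heis).c + (m:Heis).a * (m':Heis).b : ℤ) : ZMod l)) = _
    rw [Int.cast_add, Int.cast_add, (ZMod.intCast_zmod_eq_zero_iff_dvd _ _).mpr this]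
    simp [ofAdd_add]

lemma fc_surj : Function.Surjective (fc n l hln) := by
  intro c
  obtain ⟨c0, hc⟩ := ZMod.intCast_surjective (n := l) (Multiplicative.toAdd c)
  refine ⟨⟨⟨0, 0, c0⟩, (mem_ker_fab n _).mpr (by simp)⟩, ?_⟩
  simp [fc, hc]

lemma ker_fc : (fc n l hln).ker = (MH n l hln).subgroupOf (fab n).ker := by
  ext m
  have ha := (mem_ker_fab n _).mp m.2
  rw [MonoidHom.mem_ker, Subgroup.mem_subgroupOf]
  show Multiplicative.ofAdd (((m : Heis).c : ZMod l)) = 1 ↔ _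
  constructor
  · intro h
    refine ⟨ha.1, ha.2, ?_⟩
    rw [← ZMod.intCast_zmod_eq_zero_iff_dvd]
    simpa using h
  · rintro ⟨-, -, hc⟩
    simpa using (ZMod.intCast_zmod_eq_zero_iff_dvd _ _).mpr hc

lemma index_MH : (MH n l hln).index = l * (n * n) := by
  rw [← Subgroup.relIndex_mul_index (MH_le_ker n l hln)]
  congr 1
  · show ((MH n l hln).subgroupOf (fab n).ker).index = l
    rw [← ker_fc, Subgroup.index_eq_card,
      Nat.card_congr (QuotientGroup.quotientKerEquivOfSurjective _ (fc_surj n l hln)).toEquiv,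
      Nat.card_congr (Multiplicative.toAdd (α := ZMod l)), Nat.card_zmod]
  · rw [Subgroup.index_eq_card,
      Nat.card_congr (QuotientGroup.quotientKerEquivOfSurjective _ (fab_surj n)).toEquiv,
      Nat.card_prod,
      Nat.card_congr (Multiplicative.toAdd (α := ZMod n)), Nat.card_zmod]

variable (hn : 1 ≤ n) (hlc : (l : ℤ) ∣ (n.choose 2 : ℤ))
  (hbez : ∃ α β : ℤ, α * n + β * (n.choose 2 : ℤ) = l)

include hln hn hlc hbez in
lemma card_quot : Nat.card (F2 ⧸ (G3 ⊔ pw n)) = l * (n * n) := by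
  haveI := MH_normal n l hln
  set f : F2 →* Heis ⧸ (MH n l hln) := (QuotientGroup.mk' _).comp psi with hf
  have hker : f.ker = Subgroup.comap psi (MH n l hln) := by
    ext z
    rw [MonoidHom.mem_ker, Subgroup.mem_comap, hf, MonoidHom.comp_apply,
      QuotientGroup.mk'_apply, QuotientGroup.eq_one_iff]
  have hsurj : Function.Surjective f := (QuotientGroup.mk'_surjective _).comp psi_surj
  rw [← comap_eq n l hln hn hlc hbez, ← hker,
    Nat.card_congr (QuotientGroup.quotientKerEquivOfSurjective f hsurj).toEquiv,
    ← Subgroup.index_eq_card, index_MH]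

end Count

lemma numfacts (n l : ℕ) (hn : 1 ≤ n) (hl : l = if Even n then n / 2 else n) :
    (l:ℤ) ∣ (n:ℤ) ∧ (l:ℤ) ∣ (n.choose 2 : ℤ) ∧
      (∃ α β : ℤ, α * n + β * (n.choose 2 : ℤ) = l) := by
  have h2 : 2 * n.choose 2 = n * (n-1) := Heis.two_choose_two n
  by_cases he : Even n
  · obtain ⟨m, hm⟩ := he
    have hn2 : n = 2 * m := by omega
    have hlm : l = m := by rw [hl, if_pos ⟨m, hm⟩]; omega
    have hk : n * (n - 1) = 2 * (m * (n-1)) := by rw [hn2]; ring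
    have hC : n.choose 2 = m * (n-1) := by omega
    have hCZ : (n.choose 2 : ℤ) = m * ((n : ℤ) - 1) := by
      rw [hC]; push_cast [Nat.cast_sub hn]; ring
    refine ⟨⟨2, by rw [hn2, hlm]; push_cast; ring⟩,
      ⟨(n:ℤ) - 1, by rw [hCZ, hlm]⟩, ⟨1 - m, 1, ?_⟩⟩
    rw [hCZ, hlm, hn2]
    push_cast
    ring
  · have hlm : l = n := by rw [hl, if_neg he]
    obtain ⟨k, hk⟩ : ∃ k, n - 1 = 2 * k := by
      rcases Nat.even_or_odd n with h | h
      · exact absurd h he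
      · obtain ⟨k, hk⟩ := h; exact ⟨k, by omega⟩
    have hk2 : n * (n-1) = 2 * (n * k) := by rw [hk]; ring
    have hC : n.choose 2 = n * k := by omega
    exact ⟨by rw [hlm], ⟨k, by rw [hC, hlm]; push_cast; ring⟩,
      ⟨1, 0, by rw [hlm]; push_cast; ring⟩⟩

lemma final_arith (n l : ℕ) (hn : 1 ≤ n) (hl : l = if Even n then n / 2 else n) :
    l * (n * n) = if Even n then n ^ 3 / 2 else n ^ 3 := by
  by_cases he : Even n
  · obtain ⟨m, hm⟩ := he
    rw [if_pos ⟨m, hm⟩, hl, if_pos ⟨m, hm⟩]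
    have h1 : n = 2 * m := by omega
    have h2 : n ^ 3 = 2 * (4 * m^3) := by rw [h1]; ring
    rw [h2, Nat.mul_div_cancel_left _ (by norm_num), h1]
    have : 2 * m / 2 = m := by omega
    rw [this]
    ring
  · rw [if_neg he, hl, if_neg he]
    ring

/-- The area invariant `A(z) = P_z(1,1)` induces an isomorphism
from `N(2,n)' = F₂'/(γ₃(F₂)F₂ⁿ ∩ F₂')` onto `Z_l`, where `l = n/2` for `n` even
and `l = n` for `n` odd: the map `z ↦ A(z) mod l` on `F₂'` is surjective with
kernel `(γ₃(F₂)F₂ⁿ) ∩ F₂'`.  Consequently `|N(2,n)| = n³/2` for even `n` and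
`n³` for odd `n`. -/
theorem area_invariant_free_nilpotent
    (W : commutator F2 → L)
    (hadd : ∀ z w : commutator F2, W (z * w) = W z + W w)
    (hcomm : ∀ h : ⁅xx, yy⁆ ∈ commutator F2, W ⟨⁅xx, yy⁆, h⟩ = 1)
    (hconj : ∀ (u : F2) (z : commutator F2) (h : u * ↑z * u⁻¹ ∈ commutator F2),
      W ⟨u * ↑z * u⁻¹, h⟩ = mono (expx u) (expy u) * W z)
    (A : commutator F2 → ℤ)
    (hA : ∀ z : commutator F2, A z = Finsupp.sum (W z).coeff fun _ a => a)
    (n : ℕ) (hn : 1 ≤ n) (l : ℕ) (hl : l = if Even n then n / 2 else n) :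
    Function.Surjective (fun z : commutator F2 => ((A z : ℤ) : ZMod l)) ∧
    (∀ z : commutator F2,
      ((A z : ℤ) : ZMod l) = 0 ↔ (z : F2) ∈ Subgroup.lowerCentralSeries (⊤ : Subgroup F2) 2 ⊔ pw n) ∧
    Nat.card (F2 ⧸ (Subgroup.lowerCentralSeries (⊤ : Subgroup F2) 2 ⊔ pw n)) =
      (if Even n then n ^ 3 / 2 else n ^ 3) := by
  obtain ⟨hln, hlc, hbez⟩ := numfacts n l hn hl
  -- the augmentation ring homomorphism L → ℤ
  set E : L →ₐ[ℤ] ℤ := (AddMonoidAlgebra.lift (R := ℤ) (M := ℤ × ℤ) (A := ℤ)) 1 with hE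
  have hAE : ∀ z : commutator F2, A z = E (W z) := by
    intro z
    rw [hA, hE, AddMonoidAlgebra.lift_apply]
    simp
  have hmulA : ∀ z w : commutator F2, A (z * w) = A z + A w := by
    intro z w
    rw [hAE, hadd z w, map_add, ← hAE, ← hAE]
  have hA1 : A 1 = 0 := by
    have h0 := hadd 1 1
    rw [mul_one] at h0
    have hW1 : W 1 = 0 := by
      have := add_eq_left.mp h0.symm
      exact this
    rw [hAE, hW1, map_zero]
  have hAinv : ∀ z : commutator F2, A z⁻¹ = - A z := by
    intro z
    have h0 := hmulA z z⁻¹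
    rw [mul_inv_cancel, hA1] at h0
    linarith
  have hEmono : ∀ i j : ℤ, E (mono i j) = 1 := by
    intro i j
    rw [hE, mono]
    rw [AddMonoidAlgebra.lift_single]
    simp
  have hAconj : ∀ (u : F2) (z : commutator F2) (h : u * ↑z * u⁻¹ ∈ commutator F2),
      A ⟨u * ↑z * u⁻¹, h⟩ = A z := by
    intro u z h
    rw [hAE, hconj u z h, map_mul, hEmono, one_mul, ← hAE]
  -- the commutator element
  set tc : commutator F2 := ⟨tt2, t_mem_comm⟩ with htc
  have hAt : A tc = 1 := by
    rw [hAE, htc]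
    have := hcomm t_mem_comm
    rw [show W tc = 1 from this, map_one]
  set Am : commutator F2 →* Multiplicative ℤ :=
    MonoidHom.mk' (fun z => Multiplicative.ofAdd (A z)) (fun a b => by
      show Multiplicative.ofAdd (A (a * b)) =
        Multiplicative.ofAdd (A a) * Multiplicative.ofAdd (A b)
      rw [hmulA a b, ofAdd_add])
    with hAm
  have hAzpow : ∀ m : ℤ, A (tc ^ m) = m := by
    intro m
    have h := map_zpow Am tc m
    have h2 : Multiplicative.toAdd (Am (tc ^ m)) = Multiplicative.toAdd ((Am tc) ^ m) := by
      rw [h]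
    rw [toAdd_zpow] at h2
    have h3 : Multiplicative.toAdd (Am tc) = A tc := rfl
    have h4 : Multiplicative.toAdd (Am (tc ^ m)) = A (tc ^ m) := rfl
    rw [h4, h3, hAt] at h2
    simpa using h2
  -- A vanishes on γ₃
  set ZA : Subgroup F2 :=
    { carrier := {g : F2 | ∃ h : g ∈ commutator F2, A ⟨g, h⟩ = 0}
      one_mem' := ⟨one_mem _, hA1⟩
      mul_mem' := by
        rintro g1 g2 ⟨h1, e1⟩ ⟨h2, e2⟩
        refine ⟨mul_mem h1 h2, ?_⟩
        have : (⟨g1 * g2, mul_mem h1 h2⟩ : commutator F2) = ⟨g1, h1⟩ * ⟨g2, h2⟩ := rfl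
        rw [this, hmulA, e1, e2]; ring
      inv_mem' := by
        rintro g ⟨h, e⟩
        refine ⟨inv_mem h, ?_⟩
        have : (⟨g⁻¹, inv_mem h⟩ : commutator F2) = (⟨g, h⟩ : commutator F2)⁻¹ := rfl
        rw [this, hAinv, e]; ring } with hZA
  have hG3ZA : G3 ≤ ZA := by
    rw [lcs2_eq, Subgroup.commutator_le]
    intro p hp q _
    have memc : q * p⁻¹ * q⁻¹ ∈ commutator F2 := by
      have : (commutator F2).Normal := by infer_instance
      exact this.conj_mem p⁻¹ (inv_mem hp) q
    have hmem : ⁅p, q⁆ ∈ commutator F2 := by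
      rw [commutatorElement_def]
      have : p * q * p⁻¹ * q⁻¹ = p * (q * p⁻¹ * q⁻¹) := by group
      rw [this]
      exact mul_mem hp memc
    show ∃ h : ⁅p, q⁆ ∈ commutator F2, A ⟨⁅p, q⁆, h⟩ = 0
    refine ⟨hmem, ?_⟩
    have hsplit : (⟨⁅p, q⁆, hmem⟩ : commutator F2) =
        ⟨p, hp⟩ * ⟨q * p⁻¹ * q⁻¹, memc⟩ := by
      apply Subtype.ext
      show ⁅p, q⁆ = p * (q * p⁻¹ * q⁻¹)
      rw [commutatorElement_def]; group
    rw [hsplit, hmulA]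
    have : (⟨q * p⁻¹ * q⁻¹, memc⟩ : commutator F2) =
        ⟨q * ↑((⟨p, hp⟩ : commutator F2)⁻¹) * q⁻¹, by exact memc⟩ := rfl
    rw [this, hAconj, hAinv]
    ring
  have hG3comm : G3 ≤ commutator F2 := by
    rw [lcs2_eq, Subgroup.commutator_le]
    intro p hp q hq
    exact Subgroup.commutator_mem_commutator (Subgroup.mem_top p) (Subgroup.mem_top q)
  have hAvanish : ∀ (g : F2) (hg : g ∈ G3) (h : g ∈ commutator F2), A ⟨g, h⟩ = 0 := by
    intro g hg h
    obtain ⟨h', e⟩ := hG3ZA hg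
    have : (⟨g, h⟩ : commutator F2) = ⟨g, h'⟩ := rfl
    rw [this, e]
  -- A equals the Heisenberg c-coordinate
  have hAcz : ∀ z : commutator F2, A z = (psi (z : F2)).c := by
    intro z
    set c := (psi (z : F2)).c with hc
    have hz : psi (z : F2) = ⟨0, 0, c⟩ := by
      have h1 := psi_comm_a z.2
      have h2 := psi_comm_b z.2
      exact Heis.ext h1 h2 rfl
    have hg := key_mem (z : F2) 0 0 c hz
    simp only [zpow_zero, one_mul, zero_mul, sub_zero, mul_one] at hg
    have hgk : (z : F2) * (tt2 ^ c)⁻¹ ∈ commutator F2 := hG3comm hg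
    have hdecomp : z = ⟨(z : F2) * (tt2 ^ c)⁻¹, hgk⟩ * tc ^ c := by
      apply Subtype.ext
      rw [Subgroup.coe_mul]
      have : ((tc ^ c : commutator F2) : F2) = tt2 ^ c := by
        rw [SubgroupClass.coe_zpow]
      rw [this]
      group
    rw [hdecomp, hmulA, hAvanish _ hg, hAzpow, zero_add]
  constructor
  · -- surjectivity
    intro c
    obtain ⟨m, hm⟩ := ZMod.intCast_surjective (n := l) c
    exact ⟨tc ^ m, by simp only [hAzpow]; exact hm⟩
  constructor
  · -- the kernel
    intro z
    rw [ZMod.intCast_zmod_eq_zero_iff_dvd]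
    have hz : psi (z : F2) = ⟨0, 0, A z⟩ := by
      have h1 := psi_comm_a z.2
      have h2 := psi_comm_b z.2
      have h3 := hAcz z
      exact Heis.ext h1 h2 h3.symm
    rw [← comap_eq n l hln hn hlc hbez]
    constructor
    · intro hdvd
      show psi (z : F2) ∈ MH n l hln
      rw [hz]
      exact ⟨dvd_zero _, dvd_zero _, hdvd⟩
    · intro hmem
      have : psi (z : F2) ∈ MH n l hln := hmem
      rw [hz] at this
      exact this.2.2
  · -- the cardinality
    rw [card_quot n l hln hn hlc hbez, final_arith n l hn hl]
end

section
/- For every even positive integer n, the element [x,y]^{n/2} lies in γ₃(F₂) F₂ⁿ, where F₂ is the free group on x and y. -/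
open scoped commutatorElement

/-- `pw n` is a normal subgroup. -/
lemma pw_normal (n : ℕ) : (pw n).Normal := by
  constructor
  intro g hg h
  induction hg using Subgroup.closure_induction with
  | mem g hg =>
    obtain ⟨a, rfl⟩ := hg
    rw [← conj_pow]
    exact Subgroup.subset_closure ⟨h * a * h⁻¹, rfl⟩
  | one => simpa using Subgroup.one_mem _
  | mul a b _ _ ha hb =>
    have : h * (a * b) * h⁻¹ = (h * a * h⁻¹) * (h * b * h⁻¹) := by group
    rw [this]; exact Subgroup.mul_mem _ ha hb
  | inv a _ ha =>
    have : h * a⁻¹ * h⁻¹ = (h * a * h⁻¹)⁻¹ := by group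
    rw [this]; exact Subgroup.inv_mem _ ha

/-- In a group, if `⁅b,a⁆` commutes with `a` and `b`, then
`(a*b)^m = a^m * b^m * ⁅b,a⁆^(m.choose 2)`. -/
lemma class2_mul_pow {G : Type*} [Group G] (a b : G)
    (h1 : Commute ⁅b, a⁆ a) (h2 : Commute ⁅b, a⁆ b) :
    ∀ m : ℕ, (a * b) ^ m = a ^ m * b ^ m * ⁅b, a⁆ ^ m.choose 2 := by
  set c := ⁅b, a⁆ with hc
  have hba : b * a = c * (a * b) := by rw [hc]; group
  have key : ∀ m : ℕ, b ^ m * a = a * b ^ m * c ^ m := by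
    intro m
    induction m with
    | zero => simp
    | succ m ih =>
      calc b ^ (m+1) * a = b * (b ^ m * a) := by rw [pow_succ']; group
        _ = b * (a * b ^ m * c ^ m) := by rw [ih]
        _ = (b * a) * b ^ m * c ^ m := by group
        _ = c * (a * b) * b ^ m * c ^ m := by rw [hba]
        _ = c * (a * b ^ (m+1)) * c ^ m := by rw [pow_succ']; group
        _ = (a * b ^ (m+1)) * c * c ^ m := by
            rw [(h1.mul_right (h2.pow_right (m+1))).eq]
        _ = a * b ^ (m+1) * c ^ (m+1) := by rw [pow_succ]; group
  intro m
  induction m with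
  | zero => simp
  | succ m ih =>
    have hch : (m+1).choose 2 = m.choose 2 + m := by
      rw [Nat.choose_succ_succ, Nat.choose_one_right, Nat.add_comm]
    calc (a * b) ^ (m+1) = (a * b) ^ m * (a * b) := by rw [pow_succ]
      _ = a ^ m * b ^ m * c ^ m.choose 2 * (a * b) := by rw [ih]
      _ = a ^ m * b ^ m * (c ^ m.choose 2 * a) * b := by group
      _ = a ^ m * b ^ m * (a * c ^ m.choose 2) * b := by rw [(h1.pow_left _).eq]
      _ = a ^ m * (b ^ m * a) * c ^ m.choose 2 * b := by group
      _ = a ^ m * (a * b ^ m * c ^ m) * c ^ m.choose 2 * b := by rw [key m]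
      _ = a ^ (m+1) * b ^ m * (c ^ m * c ^ m.choose 2 * b) := by rw [pow_succ]; group
      _ = a ^ (m+1) * b ^ m * (b * (c ^ m * c ^ m.choose 2)) := by
          rw [(((h2.pow_left m).mul_left (h2.pow_left _)).symm).eq]
      _ = a ^ (m+1) * b ^ (m+1) * c ^ ((m+1).choose 2) := by
          rw [hch, pow_add, pow_succ]; group

/-- For every even positive integer `n`, `[x,y]^{n/2}` lies in
`γ₃(F₂)·F₂ⁿ` (here `γ₃(F₂) = lowerCentralSeries F₂ 2`). -/
theorem commutator_half_power_mem (n : ℕ) (hn : 0 < n) (he : Even n) :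
    (⁅xx, yy⁆ : F2) ^ (n / 2) ∈ (⊤ : Subgroup F2).lowerCentralSeries 2 ⊔ pw n := by
  obtain ⟨m, hm⟩ := he
  haveI : (pw n).Normal := pw_normal n
  set N : Subgroup F2 := (⊤ : Subgroup F2).lowerCentralSeries 2 ⊔ pw n with hN
  haveI : N.Normal := Subgroup.sup_normal _ _
  rw [← QuotientGroup.eq_one_iff (N := N)]
  set π : F2 →* F2 ⧸ N := QuotientGroup.mk' N with hπ
  -- every n-th power dies in the quotient
  have hpow : ∀ a : F2, π a ^ n = 1 := by
    intro a
    rw [← map_pow, hπ, QuotientGroup.mk'_apply, QuotientGroup.eq_one_iff]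
    exact Subgroup.mem_sup_right (Subgroup.subset_closure ⟨a, rfl⟩)
  -- commutators are central in the quotient
  have hcent : ∀ a b c : F2, Commute ⁅π a, π b⁆ (π c) := by
    intro a b c
    rw [← commutatorElement_eq_one_iff_commute, ← map_commutatorElement,
      ← map_commutatorElement, hπ, QuotientGroup.mk'_apply, QuotientGroup.eq_one_iff]
    refine Subgroup.mem_sup_left ?_
    have h1 : (⁅a, b⁆ : F2) ∈ (⊤ : Subgroup F2).lowerCentralSeries 1 :=
      Subgroup.commutator_mem_commutator (Subgroup.mem_top a) (Subgroup.mem_top b)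
    exact Subgroup.commutator_mem_commutator h1 (Subgroup.mem_top c)
  set A := π xx
  set B := π yy
  set c := ⁅B, A⁆ with hcdef
  have h1 : Commute c A := hcent yy xx xx
  have h2 : Commute c B := hcent yy xx yy
  have hkey := class2_mul_pow A B h1 h2 n
  rw [show A * B = π (xx * yy) from (map_mul π xx yy).symm, hpow, hpow, hpow] at hkey
  have hchoose : c ^ n.choose 2 = 1 := by
    have := hkey.symm
    simpa using this
  have hcn : c ^ n = 1 := by
    have : c = π ⁅yy, xx⁆ := by rw [hcdef, map_commutatorElement]
    rw [this]; exact hpow _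
  -- arithmetic: n = 2m, n.choose 2 = m*(2m-1), so n*m = n.choose 2 + m
  have harith : n * m = n.choose 2 + m := by
    obtain _ | m' := m
    · omega
    · have h4 : n = 2 * m' + 2 := by omega
      subst h4
      rw [Nat.choose_two_right]
      have h5 : (2 * m' + 2) * (2 * m' + 2 - 1) = ((m' + 1) * (2 * m' + 1)) * 2 := by
        have h6 : 2 * m' + 2 - 1 = 2 * m' + 1 := by omega
        rw [h6]; ring
      rw [h5, Nat.mul_div_cancel _ (by norm_num)]
      ring
  have hcm : c ^ m = 1 := by
    have : c ^ (n * m) = 1 := by rw [pow_mul, hcn, one_pow]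
    rw [harith, pow_add, hchoose, one_mul] at this
    exact this
  have hgoal : π (⁅xx, yy⁆ ^ (n / 2)) = ⁅A, B⁆ ^ m := by
    rw [map_pow, map_commutatorElement]
    congr 1
    omega
  rw [hπ, QuotientGroup.mk'_apply] at hgoal
  rw [hgoal, show (⁅A, B⁆ : F2 ⧸ N) = c⁻¹ from (commutatorElement_inv B A ▸ rfl : _),
    inv_pow, hcm, inv_one]
end
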